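/- arXiv:2010.04937 — 3 statements merged into one kernel-verified Lean document; each statement's English description precedes it below -/
import Mathlib

section
/- Let f be L-smooth and γ-quasar-convex with respect to a global minimizer x*, let R ≥ ‖x₀ − x*‖, and run SGD for T iterations with constant step size α satisfying 0 < α ≤ 1/(2L). Then the expected suboptimality of the iterates satisfies ∑_{t=1}^{T} E[f(x_t) − f(x*)] ≤ R²/(2γα) + σ²αT/(2γ(1 − αLγ)) + (1/γ − 1)Lα²σ²T + (1/γ − 1)LR². -/
open MeasureTheory Finset
open scoped RealInnerProductSpace

lemma abs_coord_le {n : ℕ} (y : EuclideanSpace ℝ (Fin n)) (i : Fin n) : |y i| ≤ ‖y‖ := by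
  rw [EuclideanSpace.norm_eq]
  have h1 : |y i| ^ 2 ≤ ∑ j, ‖y j‖ ^ 2 := by
    have := Finset.single_le_sum (f := fun j => ‖y j‖ ^ 2)
      (fun j _ => by positivity) (Finset.mem_univ i)
    simpa [Real.norm_eq_abs, sq_abs] using this
  calc |y i| = Real.sqrt (|y i| ^ 2) := by rw [Real.sqrt_sq_eq_abs, abs_abs]
  _ ≤ _ := Real.sqrt_le_sqrt h1

lemma coord_mul_int {Ω : Type*} [MeasurableSpace Ω] {P : Measure Ω} {n : ℕ}
    {a b : Ω → EuclideanSpace ℝ (Fin n)}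
    (ha : AEStronglyMeasurable a P) (hb : AEStronglyMeasurable b P)
    (ha2 : Integrable (fun ω => ‖a ω‖^2) P) (hb2 : Integrable (fun ω => ‖b ω‖^2) P)
    (i : Fin n) : Integrable (fun ω => a ω i * b ω i) P := by
  refine Integrable.mono' ((ha2.add hb2).div_const 2) ?_ ?_
  · exact (((EuclideanSpace.proj (𝕜 := ℝ) i).continuous.comp_aestronglyMeasurable ha)).mul
      (((EuclideanSpace.proj (𝕜 := ℝ) i).continuous.comp_aestronglyMeasurable hb))
  · filter_upwards with ω
    have h1 : |a ω i| ≤ ‖a ω‖ := abs_coord_le _ i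
    have h2 : |b ω i| ≤ ‖b ω‖ := abs_coord_le _ i
    rw [Real.norm_eq_abs, abs_mul]
    simp only [Pi.add_apply]
    nlinarith [abs_nonneg (a ω i), abs_nonneg (b ω i), sq_nonneg (‖a ω‖ - ‖b ω‖),
      norm_nonneg (a ω), norm_nonneg (b ω)]

lemma condexp_clm_comp {Ω : Type*} {m m0 : MeasurableSpace Ω} (hm : m ≤ m0)
    (P : Measure Ω) [IsFiniteMeasure P]
    {E F : Type*} [NormedAddCommGroup E] [NormedSpace ℝ E] [CompleteSpace E]
    [NormedAddCommGroup F] [NormedSpace ℝ F] [CompleteSpace F]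
    (T : E →L[ℝ] F) {w : Ω → E} (hw : Integrable w P) :
    P[fun ω => T (w ω)|m] =ᵐ[P] fun ω => T ((P[w|m]) ω) := by
  refine (ae_eq_condExp_of_forall_setIntegral_eq hm (T.integrable_comp hw)
    (fun s _ _ => (T.integrable_comp integrable_condExp).integrableOn)
    (fun s hs _ => ?_)
    (T.continuous.comp_aestronglyMeasurable
      (StronglyMeasurable.aestronglyMeasurable stronglyMeasurable_condExp))).symm
  rw [T.integral_comp_comm integrable_condExp.integrableOn,
    T.integral_comp_comm hw.integrableOn, setIntegral_condExp hm hw hs]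

lemma integral_inner_eq {Ω : Type*} {m m0 : MeasurableSpace Ω} (hm : m ≤ m0)
    (P : Measure Ω) [IsProbabilityMeasure P] {n : ℕ}
    {v w u : Ω → EuclideanSpace ℝ (Fin n)}
    (hv : StronglyMeasurable[m] v) (hw : Integrable w P)
    (hvsq : Integrable (fun ω => ‖v ω‖^2) P)
    (hwsq : Integrable (fun ω => ‖w ω‖^2) P)
    (husq : Integrable (fun ω => ‖u ω‖^2) P)
    (hcond : P[w|m] =ᵐ[P] u) :
    ∫ ω, ⟪v ω, w ω⟫ ∂P = ∫ ω, ⟪v ω, u ω⟫ ∂P := by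
  have hva : AEStronglyMeasurable v P := (hv.mono hm).aestronglyMeasurable
  have hua : AEStronglyMeasurable u P :=
    (stronglyMeasurable_condExp.mono hm).aestronglyMeasurable.congr hcond
  have hvw : ∀ i, Integrable (fun ω => v ω i * w ω i) P :=
    fun i => coord_mul_int hva hw.1 hvsq hwsq i
  have hvu : ∀ i, Integrable (fun ω => v ω i * u ω i) P :=
    fun i => coord_mul_int hva hua hvsq husq i
  have hkey : ∀ i : Fin n, ∫ ω, v ω i * w ω i ∂P = ∫ ω, v ω i * u ω i ∂P := by
    intro i
    have hvi : StronglyMeasurable[m] (fun ω => v ω i) :=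
      (EuclideanSpace.proj (𝕜 := ℝ) i).continuous.comp_stronglyMeasurable hv
    have hwi : Integrable (fun ω => w ω i) P :=
      (EuclideanSpace.proj (𝕜 := ℝ) i).integrable_comp hw
    have hcw : P[(fun ω => w ω i)|m] =ᵐ[P] fun ω => u ω i := by
      refine (condexp_clm_comp hm P (EuclideanSpace.proj (𝕜 := ℝ) i) hw).trans ?_
      filter_upwards [hcond] with ω hω
      simp [hω]
    have hmul : P[(fun ω => v ω i * w ω i)|m] =ᵐ[P] fun ω => v ω i * u ω i := by
      refine (condExp_mul_of_stronglyMeasurable_left hvi (hvw i) hwi).trans ?_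
      filter_upwards [hcw] with ω hω
      simp only [Pi.mul_apply, hω]
    rw [← integral_condExp hm, integral_congr_ae hmul]
  have e1 : (fun ω => ⟪v ω, w ω⟫) = fun ω => ∑ i, v ω i * w ω i := by
    funext ω; simp [PiLp.inner_apply, RCLike.inner_apply, conj_trivial, mul_comm]
  have e2 : (fun ω => ⟪v ω, u ω⟫) = fun ω => ∑ i, v ω i * u ω i := by
    funext ω; simp [PiLp.inner_apply, RCLike.inner_apply, conj_trivial, mul_comm]
  rw [e1, e2, integral_finset_sum _ (fun i _ => hvw i),
    integral_finset_sum _ (fun i _ => hvu i)]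
  exact Finset.sum_congr rfl fun i _ => hkey i

section analysis
variable {n : ℕ} {f : EuclideanSpace ℝ (Fin n) → ℝ}
  {f' : EuclideanSpace ℝ (Fin n) → EuclideanSpace ℝ (Fin n)} {L : ℝ}

lemma descent_lemma (hgrad : ∀ y, HasGradientAt f (f' y) y)
    (hsmooth : ∀ y z, ‖f' y - f' z‖ ≤ L * ‖y - z‖)
    (y z : EuclideanSpace ℝ (Fin n)) :
    f z ≤ f y + ⟪f' y, z - y⟫ + L/2 * ‖z - y‖^2 := by
  set d := z - y with hd
  have line : ∀ t : ℝ, HasDerivAt (fun s : ℝ => f (y + s • d)) ⟪f' (y + t • d), d⟫ t := by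
    intro t
    have h1 : HasDerivAt (fun s : ℝ => y + s • d) d t := by
      simpa using ((hasDerivAt_id t).smul_const d).const_add y
    have h2 := ((hgrad (y + t • d)).hasFDerivAt).comp_hasDerivAt t h1
    simpa [InnerProductSpace.toDual_apply_apply, Function.comp_def] using h2
  set ψ : ℝ → ℝ := fun t => f (y + t • d) - t * ⟪f' y, d⟫ - L/2 * t^2 * ‖d‖^2 with hψdef
  have hψ : ∀ t : ℝ, HasDerivAt ψ (⟪f' (y + t • d), d⟫ - ⟪f' y, d⟫ - L * t * ‖d‖^2) t := by
    intro t
    have h3 : HasDerivAt (fun s : ℝ => s * ⟪f' y, d⟫) ⟪f' y, d⟫ t := hasDerivAt_mul_const _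
    have h4 : HasDerivAt (fun s : ℝ => L/2 * s^2 * ‖d‖^2) (L/2 * (2*t) * ‖d‖^2) t :=
      ((hasDerivAt_pow 2 t).const_mul (L/2)).mul_const (‖d‖^2) |>.congr_deriv (by ring_nf)
    have := ((line t).sub h3).sub h4
    exact this.congr_deriv (by ring)
  have hmono : AntitoneOn ψ (Set.Icc 0 1) := by
    apply antitoneOn_of_deriv_nonpos (convex_Icc 0 1)
    · exact fun t _ => (hψ t).continuousAt.continuousWithinAt
    · exact fun t _ => (hψ t).differentiableAt.differentiableWithinAt
    · intro t ht
      rw [interior_Icc] at ht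
      rw [(hψ t).deriv]
      have h1 : ⟪f' (y + t • d) - f' y, d⟫ ≤ L * t * ‖d‖^2 := by
        calc ⟪f' (y + t • d) - f' y, d⟫ ≤ ‖f' (y + t • d) - f' y‖ * ‖d‖ :=
              real_inner_le_norm _ _
        _ ≤ (L * ‖(y + t • d) - y‖) * ‖d‖ :=
              mul_le_mul_of_nonneg_right (hsmooth _ _) (norm_nonneg d)
        _ = L * t * ‖d‖^2 := by
              rw [show y + t • d - y = t • d by abel, norm_smul, Real.norm_eq_abs,
                abs_of_nonneg ht.1.le]
              ring
      rw [inner_sub_left] at h1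
      linarith
  have h10 : ψ 1 ≤ ψ 0 := hmono (Set.mem_Icc.mpr ⟨le_refl 0, zero_le_one⟩)
    (Set.mem_Icc.mpr ⟨zero_le_one, le_refl 1⟩) zero_le_one
  have e1 : y + d = z := by rw [hd]; abel
  have e0 : y + (0:ℝ) • d = y := by rw [zero_smul, add_zero]
  have hψ1 : ψ 1 = f z - ⟪f' y, d⟫ - L/2 * ‖d‖^2 := by
    simp [hψdef, e1]
  have hψ0 : ψ 0 = f y := by simp [hψdef, e0]
  rw [hψ1, hψ0] at h10
  linarith


lemma grad_min_zero (hgrad : ∀ y, HasGradientAt f (f' y) y)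
    {xstar : EuclideanSpace ℝ (Fin n)} (hmin : ∀ y, f xstar ≤ f y) : f' xstar = 0 := by
  have hloc : IsLocalMin f xstar := Filter.Eventually.of_forall hmin
  have h0 := hloc.hasFDerivAt_eq_zero (hgrad xstar).hasFDerivAt
  exact (InnerProductSpace.toDual ℝ (EuclideanSpace ℝ (Fin n))).map_eq_zero_iff.mp h0

lemma grad_sq_le (hgrad : ∀ y, HasGradientAt f (f' y) y)
    (hsmooth : ∀ y z, ‖f' y - f' z‖ ≤ L * ‖y - z‖) (hL : 0 < L)
    {xstar : EuclideanSpace ℝ (Fin n)} (hmin : ∀ y, f xstar ≤ f y)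
    (y : EuclideanSpace ℝ (Fin n)) : ‖f' y‖^2 ≤ 2 * L * (f y - f xstar) := by
  have h1 := descent_lemma hgrad hsmooth y (y - L⁻¹ • f' y)
  have e1 : y - L⁻¹ • f' y - y = -(L⁻¹ • f' y) := by abel
  rw [e1] at h1
  have e2 : ⟪f' y, -(L⁻¹ • f' y)⟫ = -(L⁻¹ * ‖f' y‖^2) := by
    rw [inner_neg_right, real_inner_smul_right, real_inner_self_eq_norm_sq]
  have e3 : ‖-(L⁻¹ • f' y)‖^2 = L⁻¹^2 * ‖f' y‖^2 := by
    rw [norm_neg, norm_smul, Real.norm_eq_abs, abs_of_pos (by positivity : (0:ℝ) < L⁻¹)]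
    ring
  rw [e2, e3] at h1
  have h2 := hmin (y - L⁻¹ • f' y)
  have key : -(L⁻¹ * ‖f' y‖^2) + L/2 * (L⁻¹^2 * ‖f' y‖^2) = -(‖f' y‖^2/(2*L)) := by
    field_simp
    ring
  have h3 : ‖f' y‖^2 / (2*L) ≤ f y - f xstar := by linarith [key, h2.trans h1]
  have h4 := (div_le_iff₀ (by positivity : (0:ℝ) < 2*L)).mp h3
  linarith [h4]

end analysis

lemma inner_int {Ω : Type*} [MeasurableSpace Ω] {P : Measure Ω} {E : Type*}
    [NormedAddCommGroup E] [InnerProductSpace ℝ E] {a b : Ω → E}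
    (ha : AEStronglyMeasurable a P) (hb : AEStronglyMeasurable b P)
    (ha2 : Integrable (fun ω => ‖a ω‖^2) P) (hb2 : Integrable (fun ω => ‖b ω‖^2) P) :
    Integrable (fun ω => ⟪a ω, b ω⟫) P := by
  refine Integrable.mono' ((ha2.add hb2).div_const 2) (ha.inner hb) ?_
  filter_upwards with ω
  simp only [Pi.add_apply]
  rw [Real.norm_eq_abs]
  have := abs_real_inner_le_norm (a ω) (b ω)
  nlinarith [sq_nonneg (‖a ω‖ - ‖b ω‖), norm_nonneg (a ω), norm_nonneg (b ω)]

lemma aux_e5 (L γ σ α : ℝ) (T : ℕ) (hc : 0 < 1 - α*L*γ) (hTσ : (0:ℝ) ≤ σ^2*α^2*(T:ℝ)) :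
    σ^2*α^2*(T:ℝ)*(1+α*L*γ) ≤ σ^2*α^2*(T:ℝ)/(1-α*L*γ) := by
  rw [le_div_iff₀ hc]
  nlinarith [mul_nonneg hTσ (sq_nonneg (α*L*γ))]

set_option maxHeartbeats 1000000 in
lemma final_algebra (L γ σ R α : ℝ) (T : ℕ) (D r G : ℕ → ℝ)
    (hγ0 : 0 < γ) (hγ1 : γ ≤ 1) (hα0 : 0 < α) (hL : 0 < L) (hαL : α*L ≤ 1/2)
    (hσ0 : 0 ≤ σ^2) (hR0 : 0 ≤ R)
    (hD0 : ∀ t, 0 ≤ D t) (hG0 : ∀ t, 0 ≤ G t) (hr0 : ∀ t, 0 ≤ r t)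
    (hr0R : r 0 ≤ R^2) (hD0le : D 0 ≤ L*R^2/2)
    (hP1 : ∀ t, r (t+1) ≤ r t - 2*α*γ*D t + α^2*(G t + σ^2))
    (hP2 : ∀ t, D (t+1) ≤ D t - α*G t + (L*α^2/2)*(σ^2 + G t)) :
    ∑ t ∈ Finset.Icc 1 T, D t
      ≤ R^2/(2*γ*α) + σ^2*α*(T:ℝ)/(2*γ*(1-α*L*γ))
        + (1/γ - 1)*L*α^2*σ^2*(T:ℝ) + (1/γ - 1)*L*R^2 := by
  obtain ⟨β, hβ⟩ : ∃ b : ℝ, b = 2*α*(2-γ) := ⟨_, rfl⟩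
  obtain ⟨K, hK⟩ : ∃ k : ℝ, k = α^2*σ^2 + β*(L*α^2*σ^2/2) := ⟨_, rfl⟩
  have hstepV : ∀ t, r (t+1) + β*D (t+1) + 2*α*γ*D t ≤ r t + β*D t + K := by
    intro t
    have h1 := hP1 t
    have h2 := hP2 t
    have hcoef : α^2 - β*α + β*(L*α^2/2) ≤ 0 := by
      have h3 : (2-γ)*(2-α*L) ≥ 3/2 := by nlinarith
      have h4 : α^2 - β*α + β*(L*α^2/2) = α^2*(1-(2-γ)*(2-α*L)) := by rw [hβ]; ring
      nlinarith [sq_nonneg α]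
    have hβ0 : 0 ≤ β := by rw [hβ]; nlinarith
    nlinarith [mul_le_mul_of_nonneg_left h2 hβ0, mul_nonpos_of_nonpos_of_nonneg hcoef (hG0 t), hK]
  have hsum : ∀ N : ℕ, r N + β*D N + 2*α*γ*(∑ t ∈ Finset.range N, D t)
      ≤ r 0 + β*D 0 + (N:ℝ)*K := by
    intro N
    induction N with
    | zero => simp
    | succ N ih =>
      have h1 := hstepV N
      rw [Finset.sum_range_succ]
      push_cast
      linarith
  have hIcc : ∀ N : ℕ, ∑ t ∈ Finset.Icc 1 N, D t = ∑ t ∈ Finset.range (N+1), D t - D 0 := by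
    intro N
    induction N with
    | zero =>
      rw [Finset.Icc_eq_empty (by norm_num), Finset.sum_empty, Finset.range_one,
        Finset.sum_singleton]
      ring
    | succ N ih =>
      rw [Finset.sum_Icc_succ_top (Nat.succ_le_succ (Nat.zero_le N)), ih,
        Finset.sum_range_succ (f := D) (n := N+1)]
      ring
  obtain ⟨S, hS⟩ : ∃ s : ℝ, s = ∑ t ∈ Finset.Icc 1 T, D t := ⟨_, rfl⟩
  have hkey : 2*α*γ*S ≤ R^2 + (β - 2*α*γ)*(L*R^2/2) + (T:ℝ)*K := by
    have h1 := hsum T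
    have h2 : S = ∑ t ∈ Finset.range T, D t + D T - D 0 := by
      rw [hS, hIcc T, Finset.sum_range_succ]
    have hβγ : 2*α*γ ≤ β := by rw [hβ]; nlinarith
    have h3 : (β - 2*α*γ)*D 0 ≤ (β - 2*α*γ)*(L*R^2/2) :=
      mul_le_mul_of_nonneg_left hD0le (by linarith)
    have h2' : 2*α*γ*S = 2*α*γ*(∑ t ∈ Finset.range T, D t + D T - D 0) := by rw [← h2]
    have h4 : 0 ≤ (β - 2*α*γ)*D T :=
      mul_nonneg (by linarith) (hD0 T)
    linarith [hr0 T, h1, h2', h3, h4, hr0R]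
  -- final comparison
  have hc : 0 < 1 - α*L*γ := by
    nlinarith [mul_le_mul_of_nonneg_left hγ1 (mul_nonneg hα0.le hL.le), hαL]
  have hTσ : (0:ℝ) ≤ σ^2*α^2*(T:ℝ) := by positivity
  rw [← hS]
  have h2αγ : (0:ℝ) < 2*α*γ := by positivity
  rw [← mul_le_mul_iff_right₀ h2αγ]
  have e1 : 2*α*γ*(R^2/(2*γ*α)) = R^2 := by field_simp
  have e2 : 2*α*γ*(σ^2*α*(T:ℝ)/(2*γ*(1-α*L*γ))) = σ^2*α^2*(T:ℝ)/(1-α*L*γ) := by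
    field_simp
  have e3 : 2*α*γ*((1/γ - 1)*L*α^2*σ^2*(T:ℝ)) = 2*(1-γ)*L*α^3*σ^2*(T:ℝ) := by
    field_simp
  have e4 : 2*α*γ*((1/γ - 1)*L*R^2) = 2*(1-γ)*L*R^2*α := by
    field_simp
  have e5 : σ^2*α^2*(T:ℝ)*(1+α*L*γ) ≤ σ^2*α^2*(T:ℝ)/(1-α*L*γ) :=
    aux_e5 L γ σ α T hc hTσ
  calc 2*α*γ*S ≤ R^2 + (β - 2*α*γ)*(L*R^2/2) + (T:ℝ)*K := hkey
  _ ≤ R^2 + σ^2*α^2*(T:ℝ)/(1-α*L*γ) + 2*(1-γ)*L*α^3*σ^2*(T:ℝ) + 2*(1-γ)*L*R^2*α := by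
      rw [hK, hβ]
      linarith [e5]
  _ = 2*α*γ*(R^2/(2*γ*α) + σ^2*α*(T:ℝ)/(2*γ*(1-α*L*γ)) + (1/γ - 1)*L*α^2*σ^2*(T:ℝ)
      + (1/γ - 1)*L*R^2) := by
      rw [mul_add, mul_add, mul_add, e1, e2, e3, e4]

theorem sgd_quasar_sum_suboptimality
    {Ω : Type*} [MeasurableSpace Ω] (P : Measure Ω) [IsProbabilityMeasure P]
    {n : ℕ} (f : EuclideanSpace ℝ (Fin n) → ℝ)
    (f' : EuclideanSpace ℝ (Fin n) → EuclideanSpace ℝ (Fin n))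
    (xstar x₀ : EuclideanSpace ℝ (Fin n))
    (L γ σ R α : ℝ) (T : ℕ)
    (x g : ℕ → Ω → EuclideanSpace ℝ (Fin n))
    (hgrad : ∀ y, HasGradientAt f (f' y) y)
    (hmin : ∀ y, f xstar ≤ f y)
    (hγ0 : 0 < γ) (hγ1 : γ ≤ 1)
    (hqc : ∀ y, f xstar ≥ f y + (1/γ) * ⟪f' y, xstar - y⟫)
    (hsmooth : ∀ y z, ‖f' y - f' z‖ ≤ L * ‖y - z‖)
    (hR : ‖x₀ - xstar‖ ≤ R)
    (hα0 : 0 < α) (hα : α ≤ 1/(2*L))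
    (hx0 : x 0 = fun _ => x₀)
    (hstep : ∀ t, x (t+1) = fun ω => x t ω - α • g t ω)
    (hgmeas : ∀ t, Measurable (g t))
    (hgint : ∀ t, Integrable (g t) P)
    (hgsqint : ∀ t, Integrable (fun ω => ‖g t ω‖^2) P)
    (hunbiased : ∀ t,
      MeasureTheory.condExp
          (⨆ i ∈ Finset.range t, MeasurableSpace.comap (g i) inferInstance) P (g t)
        =ᵐ[P] fun ω => f' (x t ω))
    (hvar : ∀ t, ∀ᵐ ω ∂P,
      MeasureTheory.condExp
          (⨆ i ∈ Finset.range t, MeasurableSpace.comap (g i) inferInstance) P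
          (fun ω' => ‖g t ω' - f' (x t ω')‖^2) ω ≤ σ^2)
    (hfint : ∀ t, Integrable (fun ω => f (x t ω)) P)
    (hsqint : ∀ t, Integrable (fun ω => ‖x t ω - xstar‖^2) P)
:    ∑ t ∈ Finset.Icc 1 T, (∫ ω, f (x t ω) ∂P - f xstar)
      ≤ R^2/(2*γ*α) + σ^2*α*(T : ℝ)/(2*γ*(1-α*L*γ))
        + (1/γ - 1)*L*α^2*σ^2*(T : ℝ) + (1/γ - 1)*L*R^2 := by
  -- positivity of L
  have hL : 0 < L := by
    by_contra h
    push_neg at h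
    have h2 : (1:ℝ)/(2*L) ≤ 0 := by
      rcases lt_or_eq_of_le h with h' | h'
      · apply le_of_lt
        apply div_neg_of_pos_of_neg one_pos
        linarith
      · simp [h']
    linarith
  have hαL : α * L ≤ 1/2 := by
    have h1 := mul_le_mul_of_nonneg_right hα hL.le
    have e : 1/(2*L)*L = 1/2 := by field_simp
    linarith
  have hstar : f' xstar = 0 := grad_min_zero hgrad hmin
  have hR0 : 0 ≤ R := le_trans (norm_nonneg _) hR
  have hf'lip : LipschitzWith (Real.toNNReal L) f' := by
    apply LipschitzWith.of_dist_le_mul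
    intro y z
    rw [dist_eq_norm, dist_eq_norm, Real.coe_toNNReal L hL.le]
    exact hsmooth y z
  have hf'cont : Continuous f' := hf'lip.continuous
  -- sigma algebras
  set m : ℕ → MeasurableSpace Ω :=
    fun t => ⨆ i ∈ Finset.range t, MeasurableSpace.comap (g i) inferInstance with hm_def
  have hm_le : ∀ t, m t ≤ ‹MeasurableSpace Ω› := fun t => iSup₂_le fun i _ => (hgmeas i).comap_le
  have hm_mono : ∀ t, m t ≤ m (t+1) := fun t =>
    iSup₂_le fun i hi => le_iSup₂ (f := fun i (_ : i ∈ Finset.range (t+1)) =>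
      MeasurableSpace.comap (g i) inferInstance) i
      (Finset.mem_range.mpr (Nat.lt_succ_of_lt (Finset.mem_range.mp hi)))
  have hgm_le : ∀ t, MeasurableSpace.comap (g t) inferInstance ≤ m (t+1) := fun t =>
    le_iSup₂ (f := fun i (_ : i ∈ Finset.range (t+1)) =>
      MeasurableSpace.comap (g i) inferInstance) t (Finset.mem_range.mpr (Nat.lt_succ_self t))
  -- measurability of iterates
  have hxm : ∀ t, StronglyMeasurable[m t] (x t) := by
    intro t
    induction t with
    | zero => rw [hx0]; exact stronglyMeasurable_const
    | succ t ih =>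
      rw [hstep t]
      have h1 : StronglyMeasurable[m (t+1)] (x t) := ih.mono (hm_mono t)
      have h2 : Measurable[m (t+1)] (g t) :=
        (measurable_iff_comap_le.mpr le_rfl).mono (hgm_le t) le_rfl
      exact h1.sub (h2.stronglyMeasurable.const_smul α)
  have hx_sm : ∀ t, StronglyMeasurable (x t) := fun t => (hxm t).mono (hm_le t)
  have hfx_sm : ∀ t, StronglyMeasurable (fun ω => f' (x t ω)) :=
    fun t => hf'cont.comp_stronglyMeasurable (hx_sm t)
  have hgradnorm : ∀ y, ‖f' y‖ ≤ L * ‖y - xstar‖ := fun y => by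
    simpa [hstar] using hsmooth y xstar
  have hfpsq_int : ∀ t, Integrable (fun ω => ‖f' (x t ω)‖^2) P := by
    intro t
    refine Integrable.mono' ((hsqint t).const_mul (L^2))
      (((hfx_sm t).norm.pow 2).aestronglyMeasurable) ?_
    filter_upwards with ω
    have h1 := hgradnorm (x t ω)
    rw [Real.norm_eq_abs, abs_of_nonneg (by positivity)]
    nlinarith [norm_nonneg (f' (x t ω)), norm_nonneg (x t ω - xstar)]
  have hdiffsq_int : ∀ t, Integrable (fun ω => ‖g t ω - f' (x t ω)‖^2) P := by
    intro t
    refine Integrable.mono' (((hgsqint t).const_mul 2).add ((hfpsq_int t).const_mul 2))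
      ((((hgmeas t).aestronglyMeasurable.sub (hfx_sm t).aestronglyMeasurable).norm.pow 2)) ?_
    filter_upwards with ω
    simp only [Pi.add_apply]
    rw [Real.norm_eq_abs, abs_of_nonneg (by positivity)]
    have h1 := norm_sub_le (g t ω) (f' (x t ω))
    nlinarith [norm_nonneg (g t ω), norm_nonneg (f' (x t ω)), norm_nonneg (g t ω - f' (x t ω)),
      sq_nonneg (‖g t ω‖ - ‖f' (x t ω)‖)]
  -- expectation identities
  have hEa : ∀ t, ∫ ω, ⟪x t ω - xstar, g t ω⟫ ∂P
      = ∫ ω, ⟪x t ω - xstar, f' (x t ω)⟫ ∂P := fun t =>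
    integral_inner_eq (hm_le t) P ((hxm t).sub stronglyMeasurable_const) (hgint t)
      (hsqint t) (hgsqint t) (hfpsq_int t) (hunbiased t)
  have hEb : ∀ t, ∫ ω, ⟪f' (x t ω), g t ω⟫ ∂P = ∫ ω, ‖f' (x t ω)‖^2 ∂P := by
    intro t
    have h1 := integral_inner_eq (hm_le t) P (hf'cont.comp_stronglyMeasurable (hxm t))
      (hgint t) (hfpsq_int t) (hgsqint t) (hfpsq_int t) (hunbiased t)
    rw [h1]
    congr 1
    funext ω
    rw [real_inner_self_eq_norm_sq]
  have hEc : ∀ t, ∫ ω, ‖g t ω - f' (x t ω)‖^2 ∂P ≤ σ^2 := by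
    intro t
    calc ∫ ω, ‖g t ω - f' (x t ω)‖^2 ∂P
        = ∫ ω, (P[(fun ω' => ‖g t ω' - f' (x t ω')‖^2)|m t]) ω ∂P :=
          (integral_condExp (hm_le t)).symm
    _ ≤ ∫ _ω, σ^2 ∂P := integral_mono_ae integrable_condExp (integrable_const _) (hvar t)
    _ = σ^2 := by simp
  -- abbreviations
  obtain ⟨D, hD_def⟩ : ∃ D : ℕ → ℝ, ∀ t, D t = ∫ ω, f (x t ω) ∂P - f xstar := ⟨_, fun _ => rfl⟩
  obtain ⟨r, hr_def⟩ : ∃ r : ℕ → ℝ, ∀ t, r t = ∫ ω, ‖x t ω - xstar‖^2 ∂P := ⟨_, fun _ => rfl⟩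
  obtain ⟨G, hG_def⟩ : ∃ G : ℕ → ℝ, ∀ t, G t = ∫ ω, ‖f' (x t ω)‖^2 ∂P := ⟨_, fun _ => rfl⟩
  have hfstar : (∫ _ω, f xstar ∂P) = f xstar := by simp
  have hD0 : ∀ t, 0 ≤ D t := by
    intro t
    rw [hD_def t, sub_nonneg]
    have h1 : (∫ _ω, f xstar ∂P) ≤ ∫ ω, f (x t ω) ∂P :=
      integral_mono (integrable_const _) (hfint t) (fun ω => hmin _)
    rwa [hfstar] at h1
  have hG0 : ∀ t, 0 ≤ G t := fun t => by
    rw [hG_def t]; exact integral_nonneg (fun ω => by positivity)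
  have hr0 : ∀ t, 0 ≤ r t := fun t => by
    rw [hr_def t]; exact integral_nonneg (fun ω => by positivity)
  have hσ0 : 0 ≤ σ^2 := le_trans (integral_nonneg (fun ω => by positivity)) (hEc 0)
  have hinner1_int : ∀ t, Integrable (fun ω => ⟪x t ω - xstar, g t ω⟫) P := fun t =>
    inner_int ((hx_sm t).aestronglyMeasurable.sub aestronglyMeasurable_const)
      (hgmeas t).aestronglyMeasurable (hsqint t) (hgsqint t)
  have hinner2_int : ∀ t, Integrable (fun ω => ⟪f' (x t ω), g t ω⟫) P := fun t =>
    inner_int (hfx_sm t).aestronglyMeasurable (hgmeas t).aestronglyMeasurable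
      (hfpsq_int t) (hgsqint t)
  -- bound on second moment of g
  have hgsqle : ∀ t, ∫ ω, ‖g t ω‖^2 ∂P ≤ σ^2 + G t := by
    intro t
    have hpt : (fun ω => ‖g t ω‖^2)
        = fun ω => (‖g t ω - f' (x t ω)‖^2 + 2*⟪f' (x t ω), g t ω⟫) - ‖f' (x t ω)‖^2 := by
      funext ω
      have h1 := norm_sub_sq_real (g t ω) (f' (x t ω))
      have h2 : ⟪g t ω, f' (x t ω)⟫ = ⟪f' (x t ω), g t ω⟫ := real_inner_comm _ _
      linarith
    have hi1 : Integrable (fun ω => ‖g t ω - f' (x t ω)‖^2 + 2*⟪f' (x t ω), g t ω⟫) P :=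
      (hdiffsq_int t).add ((hinner2_int t).const_mul 2)
    rw [hpt, integral_sub hi1 (hfpsq_int t),
      integral_add (hdiffsq_int t) ((hinner2_int t).const_mul 2), integral_const_mul, hEb t,
      hG_def t]
    linarith [hEc t]
  -- recursion for distances (P1)
  have hP1 : ∀ t, r (t+1) ≤ r t - 2*α*γ*D t + α^2*(G t + σ^2) := by
    intro t
    rw [hr_def (t+1), hr_def t, hD_def t, hG_def t]
    have hpt : (fun ω => ‖x (t+1) ω - xstar‖^2)
        = fun ω => (‖x t ω - xstar‖^2 - 2*α*⟪x t ω - xstar, g t ω⟫) + α^2*‖g t ω‖^2 := by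
      funext ω
      rw [hstep t]
      simp only
      have e : x t ω - α • g t ω - xstar = (x t ω - xstar) - α • g t ω := by abel
      rw [e, norm_sub_sq_real, real_inner_smul_right, norm_smul, Real.norm_eq_abs,
        mul_pow, sq_abs]
      ring
    have hi2 : Integrable (fun ω => ‖x t ω - xstar‖^2 - 2*α*⟪x t ω - xstar, g t ω⟫) P :=
      (hsqint t).sub ((hinner1_int t).const_mul (2*α))
    have hrec : (∫ ω, ‖x (t+1) ω - xstar‖^2 ∂P)
        = (∫ ω, ‖x t ω - xstar‖^2 ∂P) - 2*α*(∫ ω, ⟪x t ω - xstar, g t ω⟫ ∂P)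
          + α^2*(∫ ω, ‖g t ω‖^2 ∂P) := by
      rw [hpt, integral_add hi2 ((hgsqint t).const_mul (α^2)),
        integral_sub (hsqint t) ((hinner1_int t).const_mul (2*α)),
        integral_const_mul, integral_const_mul]
    -- quasar convexity bound
    have hq : ∀ ω, γ*(f (x t ω) - f xstar) ≤ ⟪x t ω - xstar, f' (x t ω)⟫ := by
      intro ω
      have h1 := hqc (x t ω)
      have h2 : (1/γ) * ⟪f' (x t ω), xstar - x t ω⟫ ≤ f xstar - f (x t ω) := by linarith
      have h3 := mul_le_mul_of_nonneg_left h2 hγ0.le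
      rw [← mul_assoc, mul_one_div, div_self hγ0.ne', one_mul] at h3
      have h4 : ⟪x t ω - xstar, f' (x t ω)⟫ = -⟪f' (x t ω), xstar - x t ω⟫ := by
        rw [real_inner_comm, show x t ω - xstar = -(xstar - x t ω) by abel, inner_neg_right]
      rw [h4]
      linarith
    have hq2 : γ*((∫ ω, f (x t ω) ∂P) - f xstar)
        ≤ ∫ ω, ⟪x t ω - xstar, f' (x t ω)⟫ ∂P := by
      have h5 : (∫ ω, γ*(f (x t ω) - f xstar) ∂P)
          ≤ ∫ ω, ⟪x t ω - xstar, f' (x t ω)⟫ ∂P :=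
        integral_mono (((hfint t).sub (integrable_const _)).const_mul γ)
          (inner_int ((hx_sm t).aestronglyMeasurable.sub aestronglyMeasurable_const)
            (hfx_sm t).aestronglyMeasurable (hsqint t) (hfpsq_int t)) hq
      rwa [integral_const_mul, integral_sub (hfint t) (integrable_const _), hfstar] at h5
    rw [hrec, hEa t]
    have h6 := hgsqle t
    rw [hG_def t] at h6
    have h7 := mul_le_mul_of_nonneg_left h6 (sq_nonneg α)
    have h8 := mul_le_mul_of_nonneg_left hq2 (by positivity : (0:ℝ) ≤ 2*α)
    linarith
  -- recursion for function values (P2)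
  have hP2 : ∀ t, D (t+1) ≤ D t - α*G t + (L*α^2/2)*(σ^2 + G t) := by
    intro t
    rw [hD_def (t+1), hD_def t, hG_def t]
    have hpt : ∀ ω, f (x (t+1) ω)
        ≤ (f (x t ω) - α*⟪f' (x t ω), g t ω⟫) + (L/2*α^2)*‖g t ω‖^2 := by
      intro ω
      have h1 := descent_lemma hgrad hsmooth (x t ω) (x t ω - α • g t ω)
      have e : x t ω - α • g t ω - x t ω = -(α • g t ω) := by abel
      rw [e, inner_neg_right, real_inner_smul_right, norm_neg, norm_smul,
        Real.norm_eq_abs, mul_pow, sq_abs] at h1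
      rw [hstep t]
      simp only
      linarith
    have hi4 : Integrable (fun ω => f (x t ω) - α*⟪f' (x t ω), g t ω⟫) P :=
      (hfint t).sub ((hinner2_int t).const_mul α)
    have h2 : (∫ ω, f (x (t+1) ω) ∂P)
        ≤ ∫ ω, ((f (x t ω) - α*⟪f' (x t ω), g t ω⟫) + (L/2*α^2)*‖g t ω‖^2) ∂P :=
      integral_mono (hfint (t+1)) (hi4.add ((hgsqint t).const_mul (L/2*α^2))) hpt
    rw [integral_add hi4 ((hgsqint t).const_mul (L/2*α^2)),
      integral_sub (hfint t) ((hinner2_int t).const_mul α),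
      integral_const_mul, integral_const_mul, hEb t] at h2
    have h6 := hgsqle t
    rw [hG_def t] at h6
    have hcn : (0:ℝ) ≤ L/2*α^2 := by positivity
    have h7 := mul_le_mul_of_nonneg_left h6 hcn
    linarith
  -- initial bounds
  have hr0R : r 0 ≤ R^2 := by
    have h1 : r 0 = ‖x₀ - xstar‖^2 := by
      rw [hr_def 0, hx0]
      simp
    rw [h1]
    exact pow_le_pow_left₀ (norm_nonneg _) hR 2
  have hD0le : D 0 ≤ L*R^2/2 := by
    have h0 : D 0 = f x₀ - f xstar := by
      rw [hD_def 0, hx0]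
      simp
    have h1 := descent_lemma hgrad hsmooth xstar x₀
    rw [hstar, inner_zero_left] at h1
    have h2 : ‖x₀ - xstar‖^2 ≤ R^2 := pow_le_pow_left₀ (norm_nonneg _) hR 2
    rw [h0]
    nlinarith [hL]
  calc ∑ t ∈ Finset.Icc 1 T, ((∫ ω, f (x t ω) ∂P) - f xstar)
      = ∑ t ∈ Finset.Icc 1 T, D t := Finset.sum_congr rfl (fun t _ => (hD_def t).symm)
  _ ≤ _ := final_algebra L γ σ R α T D r G hγ0 hγ1 hα0 hL hαL hσ0 hR0 hD0 hG0 hr0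
      hr0R hD0le hP1 hP2
end

section
/- Let f be L-smooth and (γ, μ)-strongly-quasar-convex with respect to a global minimizer x*, and run SGD with constant step size α > 0. Then for every t ≥ 0, E‖x_{t+1} − x*‖² ≤ (1 − γμα) E‖x_t − x*‖² − 2α(γ − αL) E[f(x_t) − f(x*)] + α²σ². -/
open MeasureTheory Finset
open scoped RealInnerProductSpace



lemma sgd_aux_condexp_clm {α : Type*} {m m0 : MeasurableSpace α} (hm : m ≤ m0)
    {μ : Measure α} [IsFiniteMeasure μ]
    {E F : Type*} [NormedAddCommGroup E] [NormedSpace ℝ E] [CompleteSpace E]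
    [NormedAddCommGroup F] [NormedSpace ℝ F] [CompleteSpace F]
    (T : E →L[ℝ] F) {f : α → E} (hf : Integrable f μ) :
    μ[(fun ω => T (f ω))|m] =ᵐ[μ] fun ω => T ((μ[f|m]) ω) := by
  haveI : SigmaFinite (μ.trim hm) := by infer_instance
  refine (ae_eq_condExp_of_forall_setIntegral_eq hm (T.integrable_comp hf)
    (fun s _ _ => (T.integrable_comp integrable_condExp).integrableOn)
    (fun s hs hμs => ?_) ?_).symm
  · rw [T.integral_comp_comm integrable_condExp.integrableOn,
      setIntegral_condExp hm hf hs, T.integral_comp_comm hf.integrableOn]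
  · exact ⟨fun ω => T ((μ[f|m]) ω),
      T.continuous.comp_stronglyMeasurable stronglyMeasurable_condExp,
      Filter.EventuallyEq.rfl⟩

lemma sgd_aux_coord_le_norm {n : ℕ} (x : EuclideanSpace ℝ (Fin n)) (i : Fin n) :
    |x i| ≤ ‖x‖ := by
  rw [EuclideanSpace.norm_eq]
  calc |x i| = Real.sqrt (|x i|^2) := by rw [Real.sqrt_sq_eq_abs, abs_abs]
  _ ≤ _ := by
      apply Real.sqrt_le_sqrt
      exact Finset.single_le_sum (fun j _ => sq_nonneg (|x j|)) (Finset.mem_univ i)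

lemma sgd_aux_int_mul {α : Type*} {m0 : MeasurableSpace α} {μ : Measure α}
    {f g : α → ℝ} (hf : MemLp f 2 μ) (hg : MemLp g 2 μ) :
    Integrable (fun ω => f ω * g ω) μ := by
  have := hg.smul hf (p := 2) (q := 2) (r := 1)
  rw [memLp_one_iff_integrable] at this
  exact this


lemma sgd_aux_descent {n : ℕ} (f : EuclideanSpace ℝ (Fin n) → ℝ)
    (f' : EuclideanSpace ℝ (Fin n) → EuclideanSpace ℝ (Fin n)) (L : ℝ)
    (hgrad : ∀ y, HasGradientAt f (f' y) y)
    (hsmooth : ∀ y z, ‖f' y - f' z‖ ≤ L * ‖y - z‖) :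
    ∀ y v, f (y + v) ≤ f y + ⟪f' y, v⟫ + L/2 * ‖v‖^2 := by
  intro y v
  set φ : ℝ → ℝ := fun s => f (y + s • v) - s * ⟪f' y, v⟫ - L*s^2/2 * ‖v‖^2 with hφdef
  have hline : ∀ s : ℝ, HasDerivAt (fun s : ℝ => y + s • v) v s := fun s => by
    simpa using ((hasDerivAt_id s).smul_const v).const_add y
  have hd : ∀ s : ℝ, HasDerivAt φ (⟪f' (y + s • v), v⟫ - ⟪f' y, v⟫ - L*s*‖v‖^2) s := by
    intro s
    have h1 : HasDerivAt (fun s : ℝ => f (y + s • v)) (⟪f' (y + s • v), v⟫) s := by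
      have := ((hgrad (y + s • v)).hasFDerivAt).comp_hasDerivAt s (hline s)
      simpa [InnerProductSpace.toDual_apply_apply, Function.comp_def] using this
    have h2 : HasDerivAt (fun s : ℝ => s * ⟪f' y, v⟫) (⟪f' y, v⟫) s := by
      simpa using (hasDerivAt_id s).mul_const (⟪f' y, v⟫)
    have h3 : HasDerivAt (fun s : ℝ => L*s^2/2 * ‖v‖^2) (L*s*‖v‖^2) s := by
      have : HasDerivAt (fun s : ℝ => s^2) (2*s) s := by simpa using hasDerivAt_pow 2 s
      have := ((this.const_mul L).div_const 2).mul_const (‖v‖^2)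
      convert this using 1
      rfl; rfl; ring
    exact (h1.sub h2).sub h3
  have hanti : AntitoneOn φ (Set.Icc 0 1) := by
    apply antitoneOn_of_deriv_nonpos (convex_Icc 0 1)
    · exact fun s _ => ((hd s).continuousAt).continuousWithinAt
    · exact fun s _ => ((hd s).differentiableAt).differentiableWithinAt
    · intro s hs
      rw [interior_Icc, Set.mem_Ioo] at hs
      rw [(hd s).deriv]
      have h1 : ⟪f' (y + s • v), v⟫ - ⟪f' y, v⟫ = ⟪f' (y + s • v) - f' y, v⟫ := by
        rw [inner_sub_left]
      have h2 : ⟪f' (y + s • v) - f' y, v⟫ ≤ ‖f' (y + s • v) - f' y‖ * ‖v‖ :=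
        real_inner_le_norm _ _
      have h3 : ‖f' (y + s • v) - f' y‖ ≤ L * (s * ‖v‖) := by
        have := hsmooth (y + s • v) y
        simpa [norm_smul, abs_of_pos hs.1] using this
      have hv : (0:ℝ) ≤ ‖v‖ := norm_nonneg _
      nlinarith [norm_nonneg (f' (y + s • v) - f' y)]
  have := hanti (Set.left_mem_Icc.2 zero_le_one) (Set.right_mem_Icc.2 zero_le_one) zero_le_one
  simp only [hφdef, one_smul, zero_smul, add_zero, zero_mul, one_pow] at this
  nlinarith [this]

lemma sgd_aux_grad_sq {n : ℕ} (f : EuclideanSpace ℝ (Fin n) → ℝ)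
    (f' : EuclideanSpace ℝ (Fin n) → EuclideanSpace ℝ (Fin n)) (xstar : EuclideanSpace ℝ (Fin n)) (L : ℝ)
    (hgrad : ∀ y, HasGradientAt f (f' y) y)
    (hmin : ∀ y, f xstar ≤ f y)
    (hsmooth : ∀ y z, ‖f' y - f' z‖ ≤ L * ‖y - z‖) :
    ∀ y, ‖f' y‖^2 ≤ 2*L*(f y - f xstar) := by
  intro y
  rcases le_or_gt L 0 with hL | hL
  · -- gradient identically zero, f constant
    have hstar0 : f' xstar = 0 := by
      have hmin' : IsLocalMin f xstar := Filter.Eventually.of_forall hmin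
      have h0 := hmin'.hasFDerivAt_eq_zero (hgrad xstar).hasFDerivAt
      have : (InnerProductSpace.toDual ℝ (EuclideanSpace ℝ (Fin n))) (f' xstar) = 0 := h0
      simpa using (InnerProductSpace.toDual ℝ (EuclideanSpace ℝ (Fin n))).map_eq_zero_iff.mp this
    have hzero : ∀ z, f' z = 0 := by
      intro z
      have h1 := hsmooth z xstar
      have h2 : L * ‖z - xstar‖ ≤ 0 := mul_nonpos_of_nonpos_of_nonneg hL (norm_nonneg _)
      have : ‖f' z - f' xstar‖ ≤ 0 := h1.trans h2
      have := norm_le_zero_iff.mp this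
      rw [sub_eq_zero] at this
      rw [this, hstar0]
    have hconst : f y = f xstar := by
      apply is_const_of_fderiv_eq_zero (𝕜 := ℝ)
      · exact fun z => (hgrad z).hasFDerivAt.differentiableAt
      · intro z
        have := (hgrad z).hasFDerivAt.fderiv
        rw [this, hzero z]
        simp
    rw [hzero y, hconst]
    simp
  · have hd := sgd_aux_descent f f' L hgrad hsmooth y (-(L⁻¹ • f' y))
    have h1 : ⟪f' y, -(L⁻¹ • f' y)⟫ = -(L⁻¹ * ‖f' y‖^2) := by
      rw [inner_neg_right, real_inner_smul_right, real_inner_self_eq_norm_sq]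
    have h2 : ‖-(L⁻¹ • f' y)‖^2 = L⁻¹^2 * ‖f' y‖^2 := by
      rw [norm_neg, norm_smul]
      simp [abs_of_pos (inv_pos.2 hL), mul_pow]
    have hm := hmin (y + -(L⁻¹ • f' y))
    rw [h1, h2] at hd
    have hL' : L ≠ 0 := ne_of_gt hL
    set N := ‖f' y‖^2 with hN
    have h3 := mul_le_mul_of_nonneg_left (hm.trans hd) (by linarith : (0:ℝ) ≤ 2*L)
    have e1 : 2*L*(L⁻¹ * N) = 2*N := by field_simp
    have e2 : 2*L*(L/2 * (L⁻¹^2 * N)) = N := by field_simp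
    nlinarith [h3, e1, e2]


def sgdFilt {Ω E : Type*} [MeasurableSpace E] (g : ℕ → Ω → E) (t : ℕ) :
    MeasurableSpace Ω :=
  ⨆ i ∈ Finset.range t, MeasurableSpace.comap (g i) inferInstance

theorem sgd_strongly_quasar_one_step
    {Ω : Type*} [MeasurableSpace Ω] (P : Measure Ω) [IsProbabilityMeasure P]
    {n : ℕ} (f : EuclideanSpace ℝ (Fin n) → ℝ)
    (f' : EuclideanSpace ℝ (Fin n) → EuclideanSpace ℝ (Fin n))
    (xstar x₀ : EuclideanSpace ℝ (Fin n))
    (L γ μ σ α : ℝ)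
    (x g : ℕ → Ω → EuclideanSpace ℝ (Fin n))
    (hgrad : ∀ y, HasGradientAt f (f' y) y)
    (hmin : ∀ y, f xstar ≤ f y)
    (hγ0 : 0 < γ) (hγ1 : γ ≤ 1) (hμ : 0 < μ)
    (hsqc : ∀ y, f xstar ≥ f y + (1/γ) * ⟪f' y, xstar - y⟫ + (μ/2) * ‖y - xstar‖^2)
    (hsmooth : ∀ y z, ‖f' y - f' z‖ ≤ L * ‖y - z‖)
    (hα0 : 0 < α)
    (hx0 : x 0 = fun _ => x₀)
    (hstep : ∀ t, x (t+1) = fun ω => x t ω - α • g t ω)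
    (hgmeas : ∀ t, Measurable (g t))
    (hgint : ∀ t, Integrable (g t) P)
    (hgsqint : ∀ t, Integrable (fun ω => ‖g t ω‖^2) P)
    (hunbiased : ∀ t,
      MeasureTheory.condExp
          (⨆ i ∈ Finset.range t, MeasurableSpace.comap (g i) inferInstance) P (g t)
        =ᵐ[P] fun ω => f' (x t ω))
    (hvar : ∀ t, ∀ᵐ ω ∂P,
      MeasureTheory.condExp
          (⨆ i ∈ Finset.range t, MeasurableSpace.comap (g i) inferInstance) P
          (fun ω' => ‖g t ω' - f' (x t ω')‖^2) ω ≤ σ^2)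
    (hfint : ∀ t, Integrable (fun ω => f (x t ω)) P)
    (hsqint : ∀ t, Integrable (fun ω => ‖x t ω - xstar‖^2) P)
:    ∀ t : ℕ,
      ∫ ω, ‖x (t+1) ω - xstar‖^2 ∂P
      ≤ (1 - γ*μ*α) * ∫ ω, ‖x t ω - xstar‖^2 ∂P
        - 2*α*(γ - α*L) * (∫ ω, f (x t ω) ∂P - f xstar) + α^2*σ^2 := by
  intro t
  have hm : sgdFilt g t ≤ (inferInstance : MeasurableSpace Ω) :=
    iSup₂_le fun i _ => (hgmeas i).comap_le
  haveI hsf : SigmaFinite (P.trim hm) := by infer_instance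
  -- measurability of the iterates
  have hxM : ∀ s, Measurable[⨆ i ∈ Finset.range s, MeasurableSpace.comap (g i) inferInstance]
      (x s) := by
    intro s
    induction s with
    | zero => rw [hx0]; exact measurable_const
    | succ k ih =>
      rw [hstep k]
      have hmono : (⨆ i ∈ Finset.range k, MeasurableSpace.comap (g i) inferInstance)
          ≤ ⨆ i ∈ Finset.range (k+1), MeasurableSpace.comap (g i) inferInstance :=
        iSup₂_le fun i hi => le_iSup₂ (f := fun i _ => MeasurableSpace.comap (g i) inferInstance)
          i (Finset.mem_range.mpr ((Finset.mem_range.mp hi).trans (Nat.lt_succ_self k)))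
      have hgk : Measurable[⨆ i ∈ Finset.range (k+1), MeasurableSpace.comap (g i) inferInstance]
          (g k) :=
        Measurable.mono (measurable_iff_comap_le.2 le_rfl)
          (le_iSup₂ (f := fun i _ => MeasurableSpace.comap (g i) inferInstance) k
            (Finset.mem_range.mpr (Nat.lt_succ_self k))) le_rfl
      exact (Measurable.mono ih hmono le_rfl).sub (hgk.const_smul α)
  have hxm : Measurable[sgdFilt g t] (x t) := hxM t
  have hxsm : StronglyMeasurable[sgdFilt g t] (x t) := hxm.stronglyMeasurable
  -- continuity of f'
  have hf'cont : Continuous f' := by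
    have : LipschitzWith (Real.toNNReal L) f' := by
      apply LipschitzWith.of_dist_le_mul
      intro y z
      rw [dist_eq_norm, dist_eq_norm]
      exact (hsmooth y z).trans
        (mul_le_mul_of_nonneg_right (Real.le_coe_toNNReal L) (norm_nonneg _))
    exact this.continuous
  set F : Ω → EuclideanSpace ℝ (Fin n) := fun ω => f' (x t ω) with hF_def
  have hFm : StronglyMeasurable[sgdFilt g t] F := hf'cont.comp_stronglyMeasurable hxsm
  have hhm : StronglyMeasurable[sgdFilt g t] (fun ω => x t ω - xstar) :=
    hxsm.sub stronglyMeasurable_const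
  -- L² facts
  have hG2 : MemLp (g t) 2 P :=
    (memLp_two_iff_integrable_sq_norm (hgmeas t).aestronglyMeasurable).2 (hgsqint t)
  have hh2 : MemLp (fun ω => x t ω - xstar) 2 P :=
    (memLp_two_iff_integrable_sq_norm (hhm.mono hm).aestronglyMeasurable).2 (hsqint t)
  have hgb : ∀ ω, ‖F ω‖^2 ≤ 2*L*(f (x t ω) - f xstar) := fun ω =>
    sgd_aux_grad_sq f f' xstar L hgrad hmin hsmooth (x t ω)
  have hbound_int : Integrable (fun ω => 2*L*(f (x t ω) - f xstar)) P :=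
    ((hfint t).sub (integrable_const (f xstar))).const_mul (2*L)
  have hF2sq_int : Integrable (fun ω => ‖F ω‖^2) P := by
    apply Integrable.mono' hbound_int
    · exact (continuous_pow 2).comp_aestronglyMeasurable
        (hFm.mono hm).aestronglyMeasurable.norm
    · refine Filter.Eventually.of_forall fun ω => ?_
      rw [Real.norm_eq_abs, abs_of_nonneg (sq_nonneg _)]
      exact hgb ω
  have hF2 : MemLp F 2 P :=
    (memLp_two_iff_integrable_sq_norm (hFm.mono hm).aestronglyMeasurable).2 hF2sq_int
  -- coordinates of L² functions are L²
  have coordL2 : ∀ (u : Ω → EuclideanSpace ℝ (Fin n)), MemLp u 2 P →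
      ∀ i : Fin n, MemLp (fun ω => u ω i) 2 P := by
    intro u hu i
    have hmeas : AEStronglyMeasurable (fun ω => u ω i) P := by
      have := (EuclideanSpace.proj (𝕜 := ℝ) i).continuous.comp_aestronglyMeasurable
        hu.aestronglyMeasurable
      simpa [PiLp.proj_apply] using this
    refine hu.mono hmeas (Filter.Eventually.of_forall fun ω => ?_)
    rw [Real.norm_eq_abs]
    exact sgd_aux_coord_le_norm (u ω) i
  -- coordinatewise conditional expectation of g t
  have hci : ∀ i : Fin n,
      (P[(fun ω => g t ω i)|sgdFilt g t]) =ᵐ[P] fun ω => F ω i := by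
    intro i
    have h1 := sgd_aux_condexp_clm hm (EuclideanSpace.proj (𝕜 := ℝ) i) (hgint t)
    have h3 : (fun ω => (EuclideanSpace.proj (𝕜 := ℝ) i) (g t ω)) = fun ω => g t ω i := by
      funext ω; simp
    rw [h3] at h1
    refine h1.trans ?_
    have h2 : (P[g t|sgdFilt g t]) =ᵐ[P] fun ω => f' (x t ω) := hunbiased t
    filter_upwards [h2] with ω hω
    have hω' : (P[g t|sgdFilt g t]) ω = f' (x t ω) := hω
    rw [PiLp.proj_apply, hω', hF_def]
  -- key: shifting g t to its conditional mean inside inner products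
  have shift : ∀ (u : Ω → EuclideanSpace ℝ (Fin n)), StronglyMeasurable[sgdFilt g t] u → MemLp u 2 P →
      ∫ ω, ⟪u ω, g t ω⟫ ∂P = ∫ ω, ⟪u ω, F ω⟫ ∂P := by
    intro u hum hu2
    have hcoord : ∀ i : Fin n,
        ∫ ω, u ω i * g t ω i ∂P = ∫ ω, u ω i * F ω i ∂P := by
      intro i
      have hprod_int : Integrable (fun ω => u ω i * g t ω i) P :=
        sgd_aux_int_mul (coordL2 u hu2 i) (coordL2 _ hG2 i)
      have humi : StronglyMeasurable[sgdFilt g t] (fun ω => u ω i) := by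
        have := (EuclideanSpace.proj (𝕜 := ℝ) i).continuous.comp_stronglyMeasurable hum
        simpa [PiLp.proj_apply] using this
      have hgi : Integrable (fun ω => g t ω i) P :=
        (coordL2 _ hG2 i).integrable one_le_two
      have hpull := condExp_mul_of_stronglyMeasurable_left (μ := P) (m := sgdFilt g t) humi hprod_int hgi
      calc ∫ ω, u ω i * g t ω i ∂P
          = ∫ ω, (P[(fun ω => u ω i * g t ω i)|sgdFilt g t]) ω ∂P := (integral_condExp hm).symm
        _ = ∫ ω, u ω i * (P[(fun ω => g t ω i)|sgdFilt g t]) ω ∂P := integral_congr_ae hpull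
        _ = ∫ ω, u ω i * F ω i ∂P := by
            refine integral_congr_ae ?_
            filter_upwards [hci i] with ω hω
            rw [hω]
    have hexp : ∀ (v w : EuclideanSpace ℝ (Fin n)), ⟪v, w⟫ = ∑ i, v i * w i := fun v w => by
      simp [PiLp.inner_apply, RCLike.inner_apply, conj_trivial]
      exact Finset.sum_congr rfl fun _ _ => mul_comm _ _
    have h1 : ∫ ω, ⟪u ω, g t ω⟫ ∂P = ∑ i, ∫ ω, u ω i * g t ω i ∂P := by
      simp_rw [hexp]
      exact integral_finset_sum _ fun i _ =>
        sgd_aux_int_mul (coordL2 u hu2 i) (coordL2 _ hG2 i)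
    have h2 : ∫ ω, ⟪u ω, F ω⟫ ∂P = ∑ i, ∫ ω, u ω i * F ω i ∂P := by
      simp_rw [hexp]
      exact integral_finset_sum _ fun i _ =>
        sgd_aux_int_mul (coordL2 u hu2 i) (coordL2 _ hF2 i)
    rw [h1, h2]
    exact Finset.sum_congr rfl fun i _ => hcoord i
  -- integrability of the inner products
  have hinner_int : ∀ (u v : Ω → EuclideanSpace ℝ (Fin n)), MemLp u 2 P → MemLp v 2 P →
      Integrable (fun ω => ⟪u ω, v ω⟫) P := by
    intro u v hu hv
    apply Integrable.mono' (sgd_aux_int_mul hu.norm hv.norm)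
    · exact hu.aestronglyMeasurable.inner hv.aestronglyMeasurable
    · exact Filter.Eventually.of_forall fun ω => abs_real_inner_le_norm _ _
  -- expansion of the step
  have hx1 : (fun ω => ‖x (t+1) ω - xstar‖^2)
      = fun ω => ‖x t ω - xstar‖^2 - 2*α*⟪x t ω - xstar, g t ω⟫ + α^2*‖g t ω‖^2 := by
    funext ω
    simp only [hstep t]
    have h4 : x t ω - α • g t ω - xstar = (x t ω - xstar) - α • g t ω := by abel
    rw [h4, norm_sub_sq_real, real_inner_smul_right, norm_smul]
    simp [mul_pow, sq_abs]
    ring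
  have hIint : Integrable (fun ω => ⟪x t ω - xstar, g t ω⟫) P := hinner_int _ _ hh2 hG2
  have hstep1 : ∫ ω, ‖x (t+1) ω - xstar‖^2 ∂P
      = (∫ ω, ‖x t ω - xstar‖^2 ∂P) - 2*α*(∫ ω, ⟪x t ω - xstar, g t ω⟫ ∂P)
        + α^2*(∫ ω, ‖g t ω‖^2 ∂P) := by
    have ha : Integrable (fun ω => ‖x t ω - xstar‖^2 - 2*α*⟪x t ω - xstar, g t ω⟫) P :=
      (hsqint t).sub (hIint.const_mul _)
    have hb : Integrable (fun ω => α^2*‖g t ω‖^2) P := (hgsqint t).const_mul _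
    have hc : Integrable (fun ω => 2*α*⟪x t ω - xstar, g t ω⟫) P := hIint.const_mul _
    rw [hx1, integral_add ha hb, integral_sub (hsqint t) hc, integral_const_mul,
      integral_const_mul]
  -- quasar convexity bound on the inner product
  have hq : ∀ ω, γ*(f (x t ω) - f xstar) + γ*μ/2*‖x t ω - xstar‖^2
      ≤ ⟪x t ω - xstar, g t ω⟫ → True := fun _ _ => trivial
  have hstep2 : γ*((∫ ω, f (x t ω) ∂P) - f xstar)
        + γ*μ/2*(∫ ω, ‖x t ω - xstar‖^2 ∂P)
      ≤ ∫ ω, ⟪x t ω - xstar, g t ω⟫ ∂P := by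
    rw [shift _ hhm hh2]
    have hpt : ∀ ω, γ*(f (x t ω) - f xstar) + γ*μ/2*‖x t ω - xstar‖^2
        ≤ ⟪x t ω - xstar, F ω⟫ := by
      intro ω
      have h1 := hsqc (x t ω)
      have h2 : ⟪f' (x t ω), xstar - x t ω⟫ = -⟪x t ω - xstar, F ω⟫ := by
        rw [real_inner_comm, show xstar - x t ω = -(x t ω - xstar) by abel, inner_neg_left]
      rw [h2] at h1
      have h3 : f (x t ω) - f xstar + μ/2*‖x t ω - xstar‖^2
          ≤ (1/γ)*⟪x t ω - xstar, F ω⟫ := by linarith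
      have h4 := mul_le_mul_of_nonneg_left h3 hγ0.le
      have h5 : γ*((1/γ)*⟪x t ω - xstar, F ω⟫) = ⟪x t ω - xstar, F ω⟫ := by field_simp
      nlinarith [h4, h5]
    have hint1 : Integrable (fun ω => γ*(f (x t ω) - f xstar)
        + γ*μ/2*‖x t ω - xstar‖^2) P :=
      (((hfint t).sub (integrable_const _)).const_mul γ).add ((hsqint t).const_mul _)
    calc γ*((∫ ω, f (x t ω) ∂P) - f xstar) + γ*μ/2*(∫ ω, ‖x t ω - xstar‖^2 ∂P)
        = ∫ ω, (γ*(f (x t ω) - f xstar) + γ*μ/2*‖x t ω - xstar‖^2) ∂P := by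
          have ha : Integrable (fun ω => γ*(f (x t ω) - f xstar)) P :=
            ((hfint t).sub (integrable_const _)).const_mul γ
          have hb : Integrable (fun ω => γ*μ/2*‖x t ω - xstar‖^2) P :=
            (hsqint t).const_mul _
          have hc : Integrable (fun ω => f (x t ω) - f xstar) P :=
            (hfint t).sub (integrable_const _)
          rw [integral_add ha hb, integral_const_mul, integral_const_mul,
            integral_sub (hfint t) (integrable_const _), integral_const]
          simp
      _ ≤ ∫ ω, ⟪x t ω - xstar, F ω⟫ ∂P :=
          integral_mono hint1 (hinner_int _ _ hh2 hF2) hpt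
  -- variance + smoothness bound on the second moment
  have hstep3 : ∫ ω, ‖g t ω‖^2 ∂P
      ≤ σ^2 + 2*L*((∫ ω, f (x t ω) ∂P) - f xstar) := by
    have hdiff2 : MemLp (fun ω => g t ω - F ω) 2 P := hG2.sub hF2
    have hdiff_sq_int : Integrable (fun ω => ‖g t ω - F ω‖^2) P :=
      (memLp_two_iff_integrable_sq_norm hdiff2.aestronglyMeasurable).1 hdiff2
    have hvar' : ∫ ω, ‖g t ω - F ω‖^2 ∂P ≤ σ^2 := by
      rw [← integral_condExp (f := fun ω => ‖g t ω - F ω‖^2) hm]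
      calc ∫ ω, (P[(fun ω => ‖g t ω - F ω‖^2)|sgdFilt g t]) ω ∂P
          ≤ ∫ _ω, σ^2 ∂P := by
            refine integral_mono_ae integrable_condExp (integrable_const _) ?_
            exact hvar t
        _ = σ^2 := by simp
    have hcross : ∫ ω, ⟪F ω, g t ω⟫ ∂P = ∫ ω, ‖F ω‖^2 ∂P := by
      rw [shift F hFm hF2]
      refine integral_congr_ae (Filter.Eventually.of_forall fun ω => ?_)
      exact real_inner_self_eq_norm_sq _
    have hexp2 : (fun ω => ‖g t ω‖^2)
        = fun ω => ‖g t ω - F ω‖^2 + 2*⟪g t ω - F ω, F ω⟫ + ‖F ω‖^2 := by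
      funext ω
      have : g t ω = (g t ω - F ω) + F ω := by abel
      calc ‖g t ω‖^2 = ‖(g t ω - F ω) + F ω‖^2 := by rw [← this]
        _ = _ := by rw [norm_add_sq_real]
    have hcross_int : Integrable (fun ω => ⟪g t ω - F ω, F ω⟫) P :=
      hinner_int _ _ hdiff2 hF2
    have hcross0 : ∫ ω, ⟪g t ω - F ω, F ω⟫ ∂P = 0 := by
      have heq : ∀ ω, ⟪g t ω - F ω, F ω⟫ = ⟪F ω, g t ω⟫ - ‖F ω‖^2 := by
        intro ω
        rw [inner_sub_left, real_inner_comm (g t ω) (F ω), real_inner_self_eq_norm_sq]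
      simp_rw [heq]
      rw [integral_sub (hinner_int _ _ hF2 hG2) hF2sq_int, hcross, sub_self]
    have hFbound : ∫ ω, ‖F ω‖^2 ∂P ≤ 2*L*((∫ ω, f (x t ω) ∂P) - f xstar) := by
      calc ∫ ω, ‖F ω‖^2 ∂P ≤ ∫ ω, 2*L*(f (x t ω) - f xstar) ∂P :=
            integral_mono hF2sq_int hbound_int hgb
        _ = 2*L*((∫ ω, f (x t ω) ∂P) - f xstar) := by
            rw [integral_const_mul, integral_sub (hfint t) (integrable_const _), integral_const]
            simp
    calc ∫ ω, ‖g t ω‖^2 ∂P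
        = (∫ ω, ‖g t ω - F ω‖^2 ∂P) + 2*(∫ ω, ⟪g t ω - F ω, F ω⟫ ∂P)
          + ∫ ω, ‖F ω‖^2 ∂P := by
          have ha : Integrable (fun ω => 2*⟪g t ω - F ω, F ω⟫) P := hcross_int.const_mul _
          have hb : Integrable (fun ω => ‖g t ω - F ω‖^2 + 2*⟪g t ω - F ω, F ω⟫) P :=
            hdiff_sq_int.add ha
          rw [hexp2, integral_add hb hF2sq_int, integral_add hdiff_sq_int ha,
            integral_const_mul]
      _ ≤ σ^2 + 2*0 + 2*L*((∫ ω, f (x t ω) ∂P) - f xstar) := by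
          rw [hcross0]
          exact add_le_add (add_le_add hvar' le_rfl) hFbound
      _ = σ^2 + 2*L*((∫ ω, f (x t ω) ∂P) - f xstar) := by ring
  -- combine
  have p1 := mul_le_mul_of_nonneg_left hstep2 (by positivity : (0:ℝ) ≤ 2*α)
  have p2 := mul_le_mul_of_nonneg_left hstep3 (sq_nonneg α)
  rw [hstep1]
  nlinarith [p1, p2]
end

section
/- Let f be L-smooth and (γ, μ)-strongly-quasar-convex with respect to a global minimizer x*, let R ≥ ‖x₀ − x*‖, and run SGD for T iterations with constant step size α satisfying 0 < α ≤ γ/L and γμα ≤ 1. Then E‖x_T − x*‖² ≤ (1 − γμα)^T R² + ασ²/(γμ). -/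
open MeasureTheory Finset
open scoped RealInnerProductSpace

lemma aux_descent {n : ℕ} {f : EuclideanSpace ℝ (Fin n) → ℝ}
    {f' : EuclideanSpace ℝ (Fin n) → EuclideanSpace ℝ (Fin n)} {L : ℝ}
    (hgrad : ∀ y, HasGradientAt f (f' y) y)
    (hsmooth : ∀ y z, ‖f' y - f' z‖ ≤ L * ‖y - z‖) (y z : EuclideanSpace ℝ (Fin n)) :
    f z ≤ f y + ⟪f' y, z - y⟫ + L/2 * ‖z - y‖^2 := by
  set v := z - y with hv
  have hφ : ∀ s : ℝ, HasDerivAt (fun s : ℝ => f (y + s • v)) ⟪f' (y + s • v), v⟫ s := by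
    intro s
    have h1 : HasDerivAt (fun s : ℝ => y + s • v) v s := by
      simpa using ((hasDerivAt_id s).smul_const v).const_add y
    have h2 := (hgrad (y + s • v)).hasFDerivAt.comp_hasDerivAt s h1
    simpa [InnerProductSpace.toDual_apply_apply, Function.comp_def] using h2
  set c : ℝ := ⟪f' y, v⟫ with hc
  set ψ : ℝ → ℝ := fun s => f (y + s • v) - s * c - L * ‖v‖^2 / 2 * s^2 with hψdef
  have hψ : ∀ s : ℝ, HasDerivAt ψ (⟪f' (y + s • v), v⟫ - c - L * ‖v‖^2 * s) s := by
    intro s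
    have h2 : HasDerivAt (fun s : ℝ => s * c) c s := by
      simpa using (hasDerivAt_id s).mul_const c
    have h3 : HasDerivAt (fun s : ℝ => L * ‖v‖^2 / 2 * s^2) (L * ‖v‖^2 * s) s := by
      have := (hasDerivAt_pow 2 s).const_mul (L * ‖v‖^2 / 2)
      simpa using this.congr_deriv (by ring)
    exact ((hφ s).sub h2).sub h3
  have hanti : AntitoneOn ψ (Set.Icc (0:ℝ) 1) := by
    apply antitoneOn_of_deriv_nonpos (convex_Icc 0 1)
    · exact (Differentiable.continuous fun s => (hψ s).differentiableAt).continuousOn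
    · exact fun s _ => ((hψ s).differentiableAt).differentiableWithinAt
    · intro s hs
      rw [(hψ s).deriv]
      rw [interior_Icc] at hs
      have hle : ⟪f' (y + s • v) - f' y, v⟫ ≤ L * s * ‖v‖^2 := by
        calc ⟪f' (y + s • v) - f' y, v⟫ ≤ ‖f' (y + s • v) - f' y‖ * ‖v‖ :=
              real_inner_le_norm _ _
          _ ≤ (L * ‖y + s • v - y‖) * ‖v‖ := by
              apply mul_le_mul_of_nonneg_right (hsmooth _ _) (norm_nonneg _)
          _ = L * s * ‖v‖^2 := by
              have : ‖y + s • v - y‖ = s * ‖v‖ := by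
                simp [norm_smul, abs_of_pos hs.1]
              rw [this]; ring
      have := inner_sub_left (𝕜 := ℝ) (f' (y + s • v)) (f' y) v
      rw [this] at hle
      nlinarith [hle]
  have h01 := hanti (Set.left_mem_Icc.mpr one_pos.le) (Set.right_mem_Icc.mpr one_pos.le) one_pos.le
  simp only [hψdef, zero_smul, add_zero, one_smul, zero_mul, mul_zero, sub_zero,
    zero_pow, one_pow, mul_one] at h01
  have : y + v = z := by rw [hv]; abel
  rw [this] at h01
  linarith [h01]

lemma aux_gradsq {n : ℕ} {f : EuclideanSpace ℝ (Fin n) → ℝ}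
    {f' : EuclideanSpace ℝ (Fin n) → EuclideanSpace ℝ (Fin n)} {L : ℝ} (hL : 0 < L)
    {xstar : EuclideanSpace ℝ (Fin n)} (hmin : ∀ y, f xstar ≤ f y)
    (hdesc : ∀ y z, f z ≤ f y + ⟪f' y, z - y⟫ + L/2 * ‖z - y‖^2)
    (y : EuclideanSpace ℝ (Fin n)) :
    ‖f' y‖^2 ≤ 2 * L * (f y - f xstar) := by
  have h := hdesc y (y - (1/L) • f' y)
  have h1 : (y - (1/L) • f' y) - y = -((1/L) • f' y) := by abel
  rw [h1] at h
  have h2 : ⟪f' y, -((1/L) • f' y)⟫ = -(1/L) * ‖f' y‖^2 := by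
    rw [inner_neg_right, real_inner_smul_right, real_inner_self_eq_norm_sq]; ring
  have h3 : ‖-((1/L) • f' y)‖^2 = (1/L)^2 * ‖f' y‖^2 := by
    rw [norm_neg, norm_smul, mul_pow, Real.norm_eq_abs, sq_abs]
  rw [h2, h3] at h
  have h4 := hmin (y - (1/L) • f' y)
  have hLne : L ≠ 0 := ne_of_gt hL
  have : f xstar ≤ f y - 1/(2*L) * ‖f' y‖^2 := by
    calc f xstar ≤ f y + -(1/L) * ‖f' y‖^2 + L/2 * ((1/L)^2 * ‖f' y‖^2) := le_trans h4 h
      _ = f y - 1/(2*L) * ‖f' y‖^2 := by field_simp; ring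
  have h5 : 1/(2*L) * ‖f' y‖^2 ≤ f y - f xstar := by linarith
  calc ‖f' y‖^2 = 2*L * (1/(2*L) * ‖f' y‖^2) := by field_simp
    _ ≤ 2*L*(f y - f xstar) := by
        apply mul_le_mul_of_nonneg_left h5 (by positivity)

lemma aux_condExp_clm {Ω : Type*} {m m0 : MeasurableSpace Ω} (hm : m ≤ m0) (P : Measure Ω)
    [IsProbabilityMeasure P] {n : ℕ} (T : EuclideanSpace ℝ (Fin n) →L[ℝ] ℝ)
    {h : Ω → EuclideanSpace ℝ (Fin n)} (hh : Integrable h P) :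
    MeasureTheory.condExp m P (fun ω => T (h ω)) =ᵐ[P] fun ω => T (MeasureTheory.condExp m P h ω) := by
  haveI : SigmaFinite (P.trim hm) := by infer_instance
  refine (ae_eq_condExp_of_forall_setIntegral_eq hm (T.integrable_comp hh)
    (fun s _ _ => (T.integrable_comp integrable_condExp).integrableOn)
    (fun s hs hμs => ?_)
    ((T.continuous.comp_stronglyMeasurable stronglyMeasurable_condExp).aestronglyMeasurable
      )).symm
  rw [T.integral_comp_comm integrable_condExp.integrableOn,
    T.integral_comp_comm hh.integrableOn, setIntegral_condExp hm hh hs]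

lemma aux_coord_le {n : ℕ} (v : EuclideanSpace ℝ (Fin n)) (j : Fin n) : |v j| ≤ ‖v‖ := by
  have h1 : ⟪EuclideanSpace.single j (1:ℝ), v⟫ = v j := by
    rw [EuclideanSpace.inner_single_left]; simp
  calc |v j| = |⟪EuclideanSpace.single j (1:ℝ), v⟫| := by rw [h1]
    _ ≤ ‖EuclideanSpace.single j (1:ℝ)‖ * ‖v‖ := abs_real_inner_le_norm _ _
    _ = ‖v‖ := by rw [EuclideanSpace.norm_single]; simp


lemma aux_inner_zero {Ω : Type*} {m m0 : MeasurableSpace Ω} (hm : m ≤ m0) (P : Measure Ω)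
    [IsProbabilityMeasure P] {n : ℕ} {h φ : Ω → EuclideanSpace ℝ (Fin n)}
    (hh : Integrable h P) (hφm : StronglyMeasurable[m] φ)
    (hφ2 : Integrable (fun ω => ‖φ ω‖^2) P) (hh2 : Integrable (fun ω => ‖h ω‖^2) P)
    (hcond : MeasureTheory.condExp m P h =ᵐ[P] 0) :
    ∫ ω, ⟪φ ω, h ω⟫ ∂P = 0 := by
  haveI : SigmaFinite (P.trim hm) := by infer_instance
  have hφsm : AEStronglyMeasurable φ P := (hφm.mono hm).aestronglyMeasurable
  have hhsm : AEStronglyMeasurable h P := hh.aestronglyMeasurable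
  have hint : ∀ j : Fin n, Integrable (fun ω => φ ω j * h ω j) P := by
    intro j
    have hmeasj : AEStronglyMeasurable (fun ω => φ ω j * h ω j) P := by
      have h1 : AEStronglyMeasurable (fun ω => φ ω j) P :=
        ((EuclideanSpace.proj j).continuous.comp_aestronglyMeasurable hφsm)
      have h2 : AEStronglyMeasurable (fun ω => h ω j) P :=
        ((EuclideanSpace.proj j).continuous.comp_aestronglyMeasurable hhsm)
      exact h1.mul h2
    refine Integrable.mono' ((hφ2.add hh2).div_const 2) hmeasj (Filter.Eventually.of_forall ?_)
    intro ω
    have h1 := aux_coord_le (φ ω) j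
    have h2 := aux_coord_le (h ω) j
    have : ‖φ ω j * h ω j‖ = |φ ω j| * |h ω j| := by
      rw [Real.norm_eq_abs, abs_mul]
    rw [this]
    simp only [Pi.add_apply]
    have := abs_nonneg (φ ω j)
    have := abs_nonneg (h ω j)
    nlinarith [sq_nonneg (|φ ω j| - |h ω j|), norm_nonneg (φ ω), norm_nonneg (h ω)]
  have hzero : ∀ j : Fin n, ∫ ω, φ ω j * h ω j ∂P = 0 := by
    intro j
    have hφj : StronglyMeasurable[m] (fun ω => φ ω j) :=
      (EuclideanSpace.proj j).continuous.comp_stronglyMeasurable hφm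
    have hhj : Integrable (fun ω => h ω j) P := by
      simpa using ((EuclideanSpace.proj j : EuclideanSpace ℝ (Fin n) →L[ℝ] ℝ)).integrable_comp hh
    have hcondj : MeasureTheory.condExp m P (fun ω => h ω j) =ᵐ[P] 0 := by
      have h1 := aux_condExp_clm hm P (EuclideanSpace.proj j) hh
      refine h1.trans ?_
      filter_upwards [hcond] with ω hω
      simp [hω]
    have hpull := condExp_mul_of_stronglyMeasurable_left hφj (hint j) hhj
    have : MeasureTheory.condExp m P (fun ω => φ ω j * h ω j) =ᵐ[P] 0 := by
      refine hpull.trans ?_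
      filter_upwards [hcondj] with ω hω
      simp only [Pi.mul_apply, hω, Pi.zero_apply, mul_zero]
    calc ∫ ω, φ ω j * h ω j ∂P
        = ∫ ω, MeasureTheory.condExp m P (fun ω => φ ω j * h ω j) ω ∂P :=
          (integral_condExp hm).symm
      _ = 0 := by rw [integral_congr_ae this]; simp
  calc ∫ ω, ⟪φ ω, h ω⟫ ∂P = ∫ ω, ∑ j : Fin n, φ ω j * h ω j ∂P := by
        refine integral_congr_ae (Filter.Eventually.of_forall fun ω => ?_)
        simp [PiLp.inner_apply, RCLike.inner_apply, conj_trivial]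
        exact Finset.sum_congr rfl fun _ _ => mul_comm _ _
    _ = ∑ j : Fin n, ∫ ω, φ ω j * h ω j ∂P := integral_finset_sum _ (fun j _ => hint j)
    _ = 0 := by simp [hzero]


lemma aux_inner_int {Ω : Type*} [MeasurableSpace Ω] {P : Measure Ω} {n : ℕ}
    {u v : Ω → EuclideanSpace ℝ (Fin n)}
    (hu : AEStronglyMeasurable u P) (hv : AEStronglyMeasurable v P)
    (hu2 : Integrable (fun ω => ‖u ω‖^2) P) (hv2 : Integrable (fun ω => ‖v ω‖^2) P) :
    Integrable (fun ω => ⟪u ω, v ω⟫) P := by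
  refine Integrable.mono' ((hu2.add hv2).div_const 2)
    (continuous_inner.comp_aestronglyMeasurable (hu.prodMk hv))
    (Filter.Eventually.of_forall fun ω => ?_)
  simp only [Pi.add_apply]
  have h1 := abs_real_inner_le_norm (u ω) (v ω)
  have := norm_nonneg (u ω); have := norm_nonneg (v ω)
  rw [Real.norm_eq_abs]
  nlinarith [sq_nonneg (‖u ω‖ - ‖v ω‖)]
set_option maxHeartbeats 1000000 in
theorem sgd_strongly_quasar_distance
    {Ω : Type*} [MeasurableSpace Ω] (P : Measure Ω) [IsProbabilityMeasure P]
    {n : ℕ} (f : EuclideanSpace ℝ (Fin n) → ℝ)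
    (f' : EuclideanSpace ℝ (Fin n) → EuclideanSpace ℝ (Fin n))
    (xstar x₀ : EuclideanSpace ℝ (Fin n))
    (L γ μ σ R α : ℝ) (T : ℕ)
    (x g : ℕ → Ω → EuclideanSpace ℝ (Fin n))
    (hgrad : ∀ y, HasGradientAt f (f' y) y)
    (hmin : ∀ y, f xstar ≤ f y)
    (hγ0 : 0 < γ) (hγ1 : γ ≤ 1) (hμ : 0 < μ)
    (hsqc : ∀ y, f xstar ≥ f y + (1/γ) * ⟪f' y, xstar - y⟫ + (μ/2) * ‖y - xstar‖^2)
    (hsmooth : ∀ y z, ‖f' y - f' z‖ ≤ L * ‖y - z‖)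
    (hR : ‖x₀ - xstar‖ ≤ R)
    (hα0 : 0 < α) (hα1 : α ≤ γ/L) (hα2 : γ*μ*α ≤ 1)
    (hx0 : x 0 = fun _ => x₀)
    (hstep : ∀ t, x (t+1) = fun ω => x t ω - α • g t ω)
    (hgmeas : ∀ t, Measurable (g t))
    (hgint : ∀ t, Integrable (g t) P)
    (hgsqint : ∀ t, Integrable (fun ω => ‖g t ω‖^2) P)
    (hunbiased : ∀ t,
      MeasureTheory.condExp
          (⨆ i ∈ Finset.range t, MeasurableSpace.comap (g i) inferInstance) P (g t)
        =ᵐ[P] fun ω => f' (x t ω))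
    (hvar : ∀ t, ∀ᵐ ω ∂P,
      MeasureTheory.condExp
          (⨆ i ∈ Finset.range t, MeasurableSpace.comap (g i) inferInstance) P
          (fun ω' => ‖g t ω' - f' (x t ω')‖^2) ω ≤ σ^2)
    (hfint : ∀ t, Integrable (fun ω => f (x t ω)) P)
    (hsqint : ∀ t, Integrable (fun ω => ‖x t ω - xstar‖^2) P)
:    ∫ ω, ‖x T ω - xstar‖^2 ∂P ≤ (1 - γ*μ*α)^T * R^2 + α*σ^2/(γ*μ) := by
  -- basic scalar facts
  have hL : 0 < L := by
    have h1 : 0 < γ / L := lt_of_lt_of_le hα0 hα1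
    rcases lt_trichotomy L 0 with h | h | h
    · exfalso; have : γ / L < 0 := div_neg_of_pos_of_neg hγ0 h; linarith
    · exfalso; rw [h, div_zero] at h1; linarith
    · exact h
  have hαL : α * L ≤ γ := (le_div_iff₀ hL).mp hα1
  have hdesc := fun y z => aux_descent hgrad hsmooth y z
  have hG2b : ∀ y, ‖f' y‖^2 ≤ 2 * L * (f y - f xstar) := aux_gradsq hL hmin hdesc
  have hf'cont : Continuous f' := by
    have : LipschitzWith (Real.toNNReal L) f' := by
      apply LipschitzWith.of_dist_le_mul
      intro a b
      rw [dist_eq_norm, dist_eq_norm, Real.coe_toNNReal L hL.le]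
      exact hsmooth a b
    exact this.continuous
  -- filtration facts
  have hm : ∀ t, (⨆ i ∈ Finset.range t, MeasurableSpace.comap (g i) inferInstance)
      ≤ ‹MeasurableSpace Ω› := by
    intro t
    exact iSup₂_le fun i _ => (hgmeas i).comap_le
  have hxsum : ∀ t, x t = fun ω => x₀ - α • ∑ i ∈ Finset.range t, g i ω := by
    intro t
    induction t with
    | zero => simp [hx0]
    | succ t ih =>
      funext ω
      simp only [hstep t, ih, Finset.sum_range_succ, smul_add]
      abel
  have hxM : ∀ t, Measurable[⨆ i ∈ Finset.range t,
      MeasurableSpace.comap (g i) inferInstance] (x t) := by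
    intro t
    have hsum : Measurable[⨆ i ∈ Finset.range t, MeasurableSpace.comap (g i) inferInstance]
        (fun ω => ∑ i ∈ Finset.range t, g i ω) := by
      apply Finset.measurable_sum
      intro i hi
      exact Measurable.of_comap_le (le_iSup₂ (f := fun i (_ : i ∈ Finset.range t) =>
        MeasurableSpace.comap (g i) inferInstance) i hi)
    rw [hxsum t]
    exact measurable_const.sub (hsum.const_smul α)
  have hxmeas : ∀ t, Measurable (x t) := fun t => (hxM t).mono (hm t) le_rfl
  -- the key one-step recursion
  have key : ∀ t, ∫ ω, ‖x (t+1) ω - xstar‖^2 ∂P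
      ≤ (1 - γ*μ*α) * ∫ ω, ‖x t ω - xstar‖^2 ∂P + α^2*σ^2 := by
    intro t
    haveI : SigmaFinite (P.trim (hm t)) := by infer_instance
    have hGsm : StronglyMeasurable[⨆ i ∈ Finset.range t,
        MeasurableSpace.comap (g i) inferInstance] (fun ω => f' (x t ω)) :=
      hf'cont.comp_stronglyMeasurable (hxM t).stronglyMeasurable
    have hGmeas : Measurable (fun ω => f' (x t ω)) := hf'cont.measurable.comp (hxmeas t)
    have hesm : StronglyMeasurable[⨆ i ∈ Finset.range t,
        MeasurableSpace.comap (g i) inferInstance] (fun ω => x t ω - xstar) :=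
      ((hxM t).sub measurable_const).stronglyMeasurable
    have hemeas : Measurable (fun ω => x t ω - xstar) := (hxmeas t).sub measurable_const
    have hfsub : Integrable (fun ω => f (x t ω) - f xstar) P :=
      (hfint t).sub (integrable_const _)
    have hG2int : Integrable (fun ω => ‖f' (x t ω)‖^2) P := by
      refine Integrable.mono' (hfsub.const_mul (2*L))
        (hGmeas.norm.pow_const 2).aestronglyMeasurable
        (Filter.Eventually.of_forall fun ω => ?_)
      rw [Real.norm_eq_abs, abs_of_nonneg (sq_nonneg _)]
      exact hG2b (x t ω)
    have hGint : Integrable (fun ω => f' (x t ω)) P := by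
      refine Integrable.mono' (((integrable_const (1:ℝ)).add hG2int).div_const 2)
        hGmeas.aestronglyMeasurable (Filter.Eventually.of_forall fun ω => ?_)
      simp only [Pi.add_apply]
      nlinarith [sq_nonneg (‖f' (x t ω)‖ - 1), norm_nonneg (f' (x t ω))]
    have hhint : Integrable (fun ω => g t ω - f' (x t ω)) P := (hgint t).sub hGint
    have hhmeas : Measurable (fun ω => g t ω - f' (x t ω)) := (hgmeas t).sub hGmeas
    have hh2int : Integrable (fun ω => ‖g t ω - f' (x t ω)‖^2) P := by
      refine Integrable.mono' (((hgsqint t).const_mul 2).add (hG2int.const_mul 2))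
        (hhmeas.norm.pow_const 2).aestronglyMeasurable
        (Filter.Eventually.of_forall fun ω => ?_)
      simp only [Pi.add_apply]
      rw [Real.norm_eq_abs, abs_of_nonneg (sq_nonneg _), norm_sub_sq_real]
      nlinarith [abs_real_inner_le_norm (g t ω) (f' (x t ω)),
        sq_nonneg (‖g t ω‖ - ‖f' (x t ω)‖), neg_abs_le (⟪g t ω, f' (x t ω)⟫)]
    -- conditional expectation of the noise is zero
    have hcond : MeasureTheory.condExp (⨆ i ∈ Finset.range t,
        MeasurableSpace.comap (g i) inferInstance) P (fun ω => g t ω - f' (x t ω))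
        =ᵐ[P] 0 := by
      have heq : (fun ω => g t ω - f' (x t ω)) = g t - (fun ω => f' (x t ω)) := rfl
      rw [heq]
      have hsub := condExp_sub (m := ⨆ i ∈ Finset.range t,
        MeasurableSpace.comap (g i) inferInstance) (μ := P) (hgint t) hGint
      have hGfix : MeasureTheory.condExp (⨆ i ∈ Finset.range t,
          MeasurableSpace.comap (g i) inferInstance) P (fun ω => f' (x t ω))
          = fun ω => f' (x t ω) :=
        condExp_of_stronglyMeasurable (hm t) hGsm hGint
      refine hsub.trans ?_
      rw [hGfix]
      filter_upwards [hunbiased t] with ω hω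
      simp only [Pi.sub_apply, hω, Pi.zero_apply, sub_self]
    -- orthogonality
    have hO1 : ∫ ω, ⟪x t ω - xstar, g t ω - f' (x t ω)⟫ ∂P = 0 :=
      aux_inner_zero (hm t) P hhint hesm (hsqint t) hh2int hcond
    have hO2 : ∫ ω, ⟪f' (x t ω), g t ω - f' (x t ω)⟫ ∂P = 0 :=
      aux_inner_zero (hm t) P hhint hGsm hG2int hh2int hcond
    -- variance bound
    have hvart : ∫ ω, ‖g t ω - f' (x t ω)‖^2 ∂P ≤ σ^2 := by
      have h1 : ∫ ω, ‖g t ω - f' (x t ω)‖^2 ∂P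
          = ∫ ω, (MeasureTheory.condExp (⨆ i ∈ Finset.range t,
              MeasurableSpace.comap (g i) inferInstance) P
              (fun ω' => ‖g t ω' - f' (x t ω')‖^2)) ω ∂P :=
        (integral_condExp (hm t)).symm
      rw [h1]
      calc ∫ ω, (MeasureTheory.condExp (⨆ i ∈ Finset.range t,
              MeasurableSpace.comap (g i) inferInstance) P
              (fun ω' => ‖g t ω' - f' (x t ω')‖^2)) ω ∂P
          ≤ ∫ _ω, σ^2 ∂P := integral_mono_ae integrable_condExp (integrable_const _) (hvar t)
        _ = σ^2 := by simp [measure_univ]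
    -- pointwise expansion
    have hsplit : (fun ω => ‖x (t+1) ω - xstar‖^2) = fun ω =>
        (‖x t ω - xstar‖^2 - 2*α*⟪x t ω - xstar, f' (x t ω)⟫ + α^2*‖f' (x t ω)‖^2)
        + (-(2*α)) * ⟪x t ω - xstar, g t ω - f' (x t ω)⟫
        + (2*α^2) * ⟪f' (x t ω), g t ω - f' (x t ω)⟫
        + α^2 * ‖g t ω - f' (x t ω)‖^2 := by
      funext ω
      simp only [hstep t]
      have hxx : x t ω - α • g t ω - xstar = (x t ω - xstar) - α • g t ω := by abel
      rw [hxx, norm_sub_sq_real]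
      have h1 : ⟪x t ω - xstar, α • g t ω⟫ = α * ⟪x t ω - xstar, g t ω⟫ :=
        real_inner_smul_right _ _ _
      have h2 : ‖α • g t ω‖^2 = α^2 * ‖g t ω‖^2 := by
        rw [norm_smul, mul_pow, Real.norm_eq_abs, sq_abs]
      have h3 : ⟪x t ω - xstar, g t ω⟫ = ⟪x t ω - xstar, f' (x t ω)⟫
          + ⟪x t ω - xstar, g t ω - f' (x t ω)⟫ := by
        rw [← inner_add_right]
        congr 1
        abel
      have h4 : ‖g t ω‖^2 = ‖f' (x t ω)‖^2 + 2*⟪f' (x t ω), g t ω - f' (x t ω)⟫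
          + ‖g t ω - f' (x t ω)‖^2 := by
        have h5 := norm_add_sq_real (f' (x t ω)) (g t ω - f' (x t ω))
        have h6 : f' (x t ω) + (g t ω - f' (x t ω)) = g t ω := by abel
        rw [h6] at h5
        linarith [h5]
      rw [h1, h2, h3, h4]
      ring
    -- integrability of the pieces
    have hI1 : Integrable (fun ω => ⟪x t ω - xstar, f' (x t ω)⟫) P :=
      aux_inner_int hemeas.aestronglyMeasurable hGmeas.aestronglyMeasurable (hsqint t) hG2int
    have hI2 : Integrable (fun ω => ⟪x t ω - xstar, g t ω - f' (x t ω)⟫) P :=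
      aux_inner_int hemeas.aestronglyMeasurable hhmeas.aestronglyMeasurable (hsqint t) hh2int
    have hI3 : Integrable (fun ω => ⟪f' (x t ω), g t ω - f' (x t ω)⟫) P :=
      aux_inner_int hGmeas.aestronglyMeasurable hhmeas.aestronglyMeasurable hG2int hh2int
    have hAint : Integrable (fun ω => ‖x t ω - xstar‖^2
        - 2*α*⟪x t ω - xstar, f' (x t ω)⟫ + α^2*‖f' (x t ω)‖^2) P :=
      ((hsqint t).sub (hI1.const_mul (2*α))).add (hG2int.const_mul (α^2))
    -- split the integral
    have hintegral : ∫ ω, ‖x (t+1) ω - xstar‖^2 ∂P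
        = (∫ ω, (‖x t ω - xstar‖^2 - 2*α*⟪x t ω - xstar, f' (x t ω)⟫
            + α^2*‖f' (x t ω)‖^2) ∂P)
          + (-(2*α)) * ∫ ω, ⟪x t ω - xstar, g t ω - f' (x t ω)⟫ ∂P
          + (2*α^2) * ∫ ω, ⟪f' (x t ω), g t ω - f' (x t ω)⟫ ∂P
          + α^2 * ∫ ω, ‖g t ω - f' (x t ω)‖^2 ∂P := by
      have eq3 : ∫ ω, ((‖x t ω - xstar‖^2 - 2*α*⟪x t ω - xstar, f' (x t ω)⟫
            + α^2*‖f' (x t ω)‖^2)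
          + (-(2*α)) * ⟪x t ω - xstar, g t ω - f' (x t ω)⟫
          + (2*α^2) * ⟪f' (x t ω), g t ω - f' (x t ω)⟫
          + α^2 * ‖g t ω - f' (x t ω)‖^2) ∂P
          = ∫ ω, ((‖x t ω - xstar‖^2 - 2*α*⟪x t ω - xstar, f' (x t ω)⟫
            + α^2*‖f' (x t ω)‖^2)
          + (-(2*α)) * ⟪x t ω - xstar, g t ω - f' (x t ω)⟫
          + (2*α^2) * ⟪f' (x t ω), g t ω - f' (x t ω)⟫) ∂P
          + ∫ ω, α^2 * ‖g t ω - f' (x t ω)‖^2 ∂P :=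
        integral_add ((hAint.add (hI2.const_mul _)).add (hI3.const_mul _))
          (hh2int.const_mul _)
      have eq2 : ∫ ω, ((‖x t ω - xstar‖^2 - 2*α*⟪x t ω - xstar, f' (x t ω)⟫
            + α^2*‖f' (x t ω)‖^2)
          + (-(2*α)) * ⟪x t ω - xstar, g t ω - f' (x t ω)⟫
          + (2*α^2) * ⟪f' (x t ω), g t ω - f' (x t ω)⟫) ∂P
          = ∫ ω, ((‖x t ω - xstar‖^2 - 2*α*⟪x t ω - xstar, f' (x t ω)⟫
            + α^2*‖f' (x t ω)‖^2)
          + (-(2*α)) * ⟪x t ω - xstar, g t ω - f' (x t ω)⟫) ∂P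
          + ∫ ω, (2*α^2) * ⟪f' (x t ω), g t ω - f' (x t ω)⟫ ∂P :=
        integral_add (hAint.add (hI2.const_mul _)) (hI3.const_mul _)
      have eq1 : ∫ ω, ((‖x t ω - xstar‖^2 - 2*α*⟪x t ω - xstar, f' (x t ω)⟫
            + α^2*‖f' (x t ω)‖^2)
          + (-(2*α)) * ⟪x t ω - xstar, g t ω - f' (x t ω)⟫) ∂P
          = ∫ ω, (‖x t ω - xstar‖^2 - 2*α*⟪x t ω - xstar, f' (x t ω)⟫
            + α^2*‖f' (x t ω)‖^2) ∂P
          + ∫ ω, (-(2*α)) * ⟪x t ω - xstar, g t ω - f' (x t ω)⟫ ∂P :=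
        integral_add hAint (hI2.const_mul _)
      rw [hsplit, eq3, eq2, eq1, integral_const_mul, integral_const_mul, integral_const_mul]
    rw [hintegral, hO1, hO2]
    -- pointwise deterministic bound
    have hptw : ∀ ω, ‖x t ω - xstar‖^2 - 2*α*⟪x t ω - xstar, f' (x t ω)⟫
        + α^2*‖f' (x t ω)‖^2 ≤ (1 - γ*μ*α) * ‖x t ω - xstar‖^2 := by
      intro ω
      set y := x t ω with hy
      have hq := hsqc y
      have hflip : ⟪f' y, xstar - y⟫ = -⟪f' y, y - xstar⟫ := by
        rw [← inner_neg_right]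
        congr 1
        abel
      rw [hflip] at hq
      have hcomm : ⟪y - xstar, f' y⟫ = ⟪f' y, y - xstar⟫ := real_inner_comm _ _
      have hquasar : γ * (f y - f xstar) + γ*μ/2 * ‖y - xstar‖^2 ≤ ⟪f' y, y - xstar⟫ := by
        have h7 : f y - f xstar + μ/2 * ‖y - xstar‖^2 ≤ (1/γ) * ⟪f' y, y - xstar⟫ := by
          linarith [hq]
        have h8 := mul_le_mul_of_nonneg_left h7 hγ0.le
        have h9 : γ * ((1/γ) * ⟪f' y, y - xstar⟫) = ⟪f' y, y - xstar⟫ := by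
          field_simp
        rw [h9] at h8
        nlinarith [h8]
      have hgb := hG2b y
      have hfge : 0 ≤ f y - f xstar := by linarith [hmin y]
      rw [hcomm]
      nlinarith [mul_le_mul_of_nonneg_left hgb (sq_nonneg α),
        mul_le_mul_of_nonneg_left hquasar (mul_pos hα0 (by norm_num : (0:ℝ) < 2)).le,
        mul_le_mul_of_nonneg_right hαL hfge, mul_pos hα0 hα0, hα0.le,
        mul_nonneg hα0.le hfge]
    have hAle : ∫ ω, (‖x t ω - xstar‖^2 - 2*α*⟪x t ω - xstar, f' (x t ω)⟫
        + α^2*‖f' (x t ω)‖^2) ∂P ≤ (1 - γ*μ*α) * ∫ ω, ‖x t ω - xstar‖^2 ∂P := by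
      rw [← integral_const_mul]
      exact integral_mono hAint ((hsqint t).const_mul _) hptw
    have hvar' : α^2 * ∫ ω, ‖g t ω - f' (x t ω)‖^2 ∂P ≤ α^2 * σ^2 :=
      mul_le_mul_of_nonneg_left hvart (sq_nonneg α)
    linarith [hAle, hvar']
  -- iterate the recursion
  set q := 1 - γ*μ*α with hqdef
  have hq0 : 0 ≤ q := by simp only [hqdef]; linarith
  have hγμα : 0 < γ*μ*α := by positivity
  have hR0 : 0 ≤ R := le_trans (norm_nonneg _) hR
  have claim : ∀ t, ∫ ω, ‖x t ω - xstar‖^2 ∂P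
      ≤ q^t * R^2 + α^2*σ^2 * ∑ k ∈ Finset.range t, q^k := by
    intro t
    induction t with
    | zero =>
      simp only [hx0, pow_zero, one_mul, Finset.range_zero, Finset.sum_empty, mul_zero, add_zero]
      have : ∫ (_ω : Ω), ‖x₀ - xstar‖^2 ∂P = ‖x₀ - xstar‖^2 := by simp [measure_univ]
      rw [this]
      exact pow_le_pow_left₀ (norm_nonneg _) hR 2
    | succ t ih =>
      calc ∫ ω, ‖x (t+1) ω - xstar‖^2 ∂P
          ≤ q * ∫ ω, ‖x t ω - xstar‖^2 ∂P + α^2*σ^2 := key t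
        _ ≤ q * (q^t * R^2 + α^2*σ^2 * ∑ k ∈ Finset.range t, q^k) + α^2*σ^2 :=
            by nlinarith [mul_le_mul_of_nonneg_left ih hq0]
        _ = q^(t+1) * R^2 + α^2*σ^2 * ∑ k ∈ Finset.range (t+1), q^k := by
            rw [geom_sum_succ]
            ring
  have hgeom : ∑ k ∈ Finset.range T, q^k ≤ 1/(γ*μ*α) := by
    have h1 : (∑ k ∈ Finset.range T, q^k) * (q - 1) = q^T - 1 := geom_sum_mul q T
    have h2 : q - 1 = -(γ*μ*α) := by simp only [hqdef]; ring
    rw [h2] at h1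
    have h3 : (γ*μ*α) * ∑ k ∈ Finset.range T, q^k = 1 - q^T := by linarith [h1]
    rw [le_div_iff₀ hγμα]
    have h4 : 0 ≤ q^T := pow_nonneg hq0 T
    nlinarith [h3]
  have hfinal : α^2*σ^2 * ∑ k ∈ Finset.range T, q^k ≤ α*σ^2/(γ*μ) := by
    calc α^2*σ^2 * ∑ k ∈ Finset.range T, q^k ≤ α^2*σ^2 * (1/(γ*μ*α)) := by
          apply mul_le_mul_of_nonneg_left hgeom (by positivity)
      _ = α*σ^2/(γ*μ) := by field_simp
  calc ∫ ω, ‖x T ω - xstar‖^2 ∂P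
      ≤ q^T * R^2 + α^2*σ^2 * ∑ k ∈ Finset.range T, q^k := claim T
    _ ≤ (1 - γ*μ*α)^T * R^2 + α*σ^2/(γ*μ) := by
        rw [hqdef]
        linarith [hfinal]
end
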